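/- arXiv:1601.02731 — 6 statements merged into one kernel-verified Lean document; each statement's English description precedes it below -/
import Mathlib

section
/- Let n ≥ 2 and let σ ∈ S_n be an involution that is the product of k pairwise disjoint transpositions (i_1,j_1),…,(i_k,j_k) with i_s < j_s for all s (disjoint meaning all 2k endpoints are distinct). Let S denote the link pattern on vertex set {1,…,n} whose arcs are the pairs (i_s,j_s). Then the number of inversions of σ, i.e. #{(s,t) : 1 ≤ s < t ≤ n, σ(s) > σ(t)}, equals 2k² − k + 2·b(S) − 2·c(S) − 4·r(S). -/
open Finset

private lemma prod_swap_fix {α : Type*} [DecidableEq α] (l : List (α × α)) (x : α)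
    (h : ∀ q ∈ l, x ≠ q.1 ∧ x ≠ q.2) :
    (l.map fun q => Equiv.swap q.1 q.2).prod x = x := by
  induction l with
  | nil => simp
  | cons a l ih =>
      simp only [List.map_cons, List.prod_cons, Equiv.Perm.mul_apply]
      rw [ih (fun q hq => h q (List.mem_cons_of_mem _ hq))]
      exact Equiv.swap_apply_of_ne_of_ne (h a (.head l)).1 (h a (.head l)).2

private lemma prod_swap_apply {α : Type*} [DecidableEq α] (l : List (α × α))
    (hpw : l.Pairwise fun q r => q.1 ≠ r.1 ∧ q.1 ≠ r.2 ∧ q.2 ≠ r.1 ∧ q.2 ≠ r.2)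
    (q : α × α) (hq : q ∈ l) :
    (l.map fun r => Equiv.swap r.1 r.2).prod q.1 = q.2 ∧
    (l.map fun r => Equiv.swap r.1 r.2).prod q.2 = q.1 := by
  induction l with
  | nil => simp at hq
  | cons a l ih =>
      obtain ⟨ha, hpl⟩ := List.pairwise_cons.mp hpw
      simp only [List.map_cons, List.prod_cons, Equiv.Perm.mul_apply]
      rcases List.mem_cons.mp hq with rfl | hq
      · rw [prod_swap_fix l q.1 (fun r hr => ⟨(ha r hr).1, (ha r hr).2.1⟩),
            prod_swap_fix l q.2 (fun r hr => ⟨(ha r hr).2.2.1, (ha r hr).2.2.2⟩)]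
        simp
      · obtain ⟨h1, h2⟩ := ih hpl hq
        rw [h1, h2]
        exact ⟨Equiv.swap_apply_of_ne_of_ne (Ne.symm (ha q hq).2.1) (Ne.symm (ha q hq).2.2.2),
          Equiv.swap_apply_of_ne_of_ne (Ne.symm (ha q hq).1) (Ne.symm (ha q hq).2.2.1)⟩

/-- Let `σ ∈ Sₙ` (`n ≥ 2`) be the product of `k` pairwise disjoint
transpositions `(iₛ, jₛ)` with `iₛ < jₛ` (encoded as `p s = (iₛ, jₛ)`), and let the
corresponding link pattern have crossing number `c`, right-pair number `r` and bridge
number `b`.  Then the number of inversions of `σ` equals `2k² − k + 2b − 2c − 4r`. -/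
theorem length_of_involution_typeA (n k : ℕ) (hn : 2 ≤ n)
    (p : Fin k → Fin n × Fin n)
    (hlt : ∀ s, (p s).1 < (p s).2)
    (hdisj : ∀ s t : Fin k, s ≠ t →
      (p s).1 ≠ (p t).1 ∧ (p s).1 ≠ (p t).2 ∧ (p s).2 ≠ (p t).1 ∧ (p s).2 ≠ (p t).2)
    (σ : Equiv.Perm (Fin n))
    (hσ : σ = (List.ofFn fun s => Equiv.swap (p s).1 (p s).2).prod) :
    ((Finset.univ.filter fun st : Fin n × Fin n =>
        st.1 < st.2 ∧ σ st.2 < σ st.1).card : ℤ) =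
      2 * (k : ℤ) ^ 2 - (k : ℤ)
        + 2 * ((Finset.univ.filter fun sq : Fin k × Fin n =>
            (p sq.1).1 < sq.2 ∧ sq.2 < (p sq.1).2 ∧
              ∀ t : Fin k, sq.2 ≠ (p t).1 ∧ sq.2 ≠ (p t).2).card : ℤ)
        - 2 * ((Finset.univ.filter fun st : Fin k × Fin k =>
            (p st.2).1 < (p st.1).1 ∧ (p st.1).1 < (p st.2).2 ∧
              (p st.2).2 < (p st.1).2).card : ℤ)
        - 4 * ((Finset.univ.filter fun st : Fin k × Fin k =>
            (p st.1).2 < (p st.2).1).card : ℤ) := by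
  have hL : σ = ((List.ofFn p).map fun q => Equiv.swap q.1 q.2).prod := by
    rw [hσ, List.map_ofFn]; rfl
  have hpw : (List.ofFn p).Pairwise fun q r => q.1 ≠ r.1 ∧ q.1 ≠ r.2 ∧ q.2 ≠ r.1 ∧ q.2 ≠ r.2 := by
    rw [List.pairwise_ofFn]
    intro i j hij
    exact hdisj i j (ne_of_lt hij)
  have hσi : ∀ s, σ (p s).1 = (p s).2 := by
    intro s; rw [hL]
    exact (prod_swap_apply _ hpw (p s) (List.mem_ofFn.mpr ⟨s, rfl⟩)).1
  have hσj : ∀ s, σ (p s).2 = (p s).1 := by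
    intro s; rw [hL]
    exact (prod_swap_apply _ hpw (p s) (List.mem_ofFn.mpr ⟨s, rfl⟩)).2
  have hσf : ∀ x : Fin n, (∀ s, x ≠ (p s).1 ∧ x ≠ (p s).2) → σ x = x := by
    intro x hx; rw [hL]
    refine prod_swap_fix _ x fun q hq => ?_
    obtain ⟨s, rfl⟩ := List.mem_ofFn.mp hq
    exact hx s
  have inj1 : ∀ s t, (p s).1 = (p t).1 → s = t := by
    intro s t h; by_contra hst; exact (hdisj s t hst).1 h
  have inj2 : ∀ s t, (p s).2 = (p t).2 → s = t := by
    intro s t h; by_contra hst; exact (hdisj s t hst).2.2.2 h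
  have h12 : ∀ s t, (p s).1 ≠ (p t).2 := by
    intro s t h
    rcases eq_or_ne s t with rfl | hst
    · exact absurd h (ne_of_lt (hlt s))
    · exact (hdisj s t hst).2.1 h
  have classify : ∀ x : Fin n,
      (∃ s, x = (p s).1) ∨ (∃ s, x = (p s).2) ∨ (∀ s, x ≠ (p s).1 ∧ x ≠ (p s).2) := by
    intro x
    by_cases h1 : ∃ s, x = (p s).1
    · exact Or.inl h1
    · by_cases h2 : ∃ s, x = (p s).2
      · exact Or.inr (Or.inl h2)
      · push_neg at h1 h2
        exact Or.inr (Or.inr fun s => ⟨h1 s, h2 s⟩)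
  set I := Finset.univ.filter (fun st : Fin n × Fin n => st.1 < st.2 ∧ σ st.2 < σ st.1)
    with hIdef
  set bf := Finset.univ.filter (fun sq : Fin k × Fin n =>
      (p sq.1).1 < sq.2 ∧ sq.2 < (p sq.1).2 ∧ ∀ t : Fin k, sq.2 ≠ (p t).1 ∧ sq.2 ≠ (p t).2)
    with hbf
  set Cf := Finset.univ.filter (fun st : Fin k × Fin k =>
      (p st.2).1 < (p st.1).1 ∧ (p st.1).1 < (p st.2).2 ∧ (p st.2).2 < (p st.1).2) with hCf
  set Rf := Finset.univ.filter (fun st : Fin k × Fin k => (p st.1).2 < (p st.2).1) with hRf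
  set Nf := Finset.univ.filter (fun st : Fin k × Fin k =>
      (p st.1).1 < (p st.2).1 ∧ (p st.2).2 < (p st.1).2) with hNf
  set M1 := Finset.univ.filter (fun st : Fin k × Fin k =>
      (p st.1).1 < (p st.2).2 ∧ (p st.2).2 < (p st.1).2) with hM1
  -- M1 = Cf ∪ Nf
  have hdisCN : Disjoint Cf Nf := by
    rw [Finset.disjoint_left]
    rintro ⟨s, t⟩ hc hn'
    rw [hCf, Finset.mem_filter] at hc
    rw [hNf, Finset.mem_filter] at hn'
    exact absurd hn'.2.1 (lt_asymm hc.2.1)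
  have hM1CN : M1 = Cf ∪ Nf := by
    ext ⟨s, t⟩
    simp only [hM1, hCf, hNf, Finset.mem_filter, Finset.mem_union, Finset.mem_univ, true_and]
    constructor
    · rintro ⟨h1, h2⟩
      rcases lt_trichotomy (p t).1 (p s).1 with h | h | h
      · exact Or.inl ⟨h, h1, h2⟩
      · obtain rfl := inj1 t s h
        exact absurd h2 (lt_irrefl _)
      · exact Or.inr ⟨h, h2⟩
    · rintro (⟨h1, h2, h3⟩ | ⟨h1, h2⟩)
      · exact ⟨h2, h3⟩
      · exact ⟨lt_trans h1 (hlt t), h2⟩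
  have hM1card : M1.card = Cf.card + Nf.card := by
    rw [hM1CN, Finset.card_union_of_disjoint hdisCN]
  -- the pair count
  set G := M1 ∪ Rf with hG
  have hGne : ∀ s : Fin k, (s, s) ∉ G := by
    intro s hs
    rw [hG, Finset.mem_union, hM1, hRf, Finset.mem_filter, Finset.mem_filter] at hs
    rcases hs with ⟨-, -, h⟩ | ⟨-, h⟩
    · exact absurd h (lt_irrefl _)
    · exact absurd (hlt s) (lt_asymm h)
  have hGnotboth : ∀ s t : Fin k, (s, t) ∈ G → (t, s) ∈ G → False := by
    intro s t h1 h2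
    rw [hG, Finset.mem_union, hM1, hRf, Finset.mem_filter, Finset.mem_filter] at h1 h2
    rcases h1 with ⟨-, m1, m2⟩ | ⟨-, r1⟩ <;> rcases h2 with ⟨-, m1', m2'⟩ | ⟨-, r1'⟩
    · exact absurd m2' (lt_asymm m2)
    · exact absurd r1' (lt_asymm m1)
    · exact absurd m1' (lt_asymm r1)
    · exact absurd (lt_trans (lt_trans (lt_trans (hlt s) r1) (hlt t)) r1') (lt_irrefl _)
  have hGcover : ∀ s t : Fin k, s ≠ t → (s, t) ∈ G ∨ (t, s) ∈ G := by
    intro s t hst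
    obtain ⟨d1, d2, d3, d4⟩ := hdisj s t hst
    simp only [hG, Finset.mem_union, hM1, hRf, Finset.mem_filter, Finset.mem_univ, true_and]
    rcases lt_or_gt_of_ne d4 with hbd | hbd
    · rcases lt_or_gt_of_ne d3 with hcb | hcb
      · exact Or.inl (Or.inr hcb)
      · exact Or.inr (Or.inl ⟨hcb, hbd⟩)
    · rcases lt_or_gt_of_ne (h12 s t) with hcb | hcb
      · exact Or.inl (Or.inl ⟨hcb, hbd⟩)
      · exact Or.inr (Or.inr hcb)
  have hdiagcard : (Finset.univ.filter fun st : Fin k × Fin k => st.1 = st.2).card = k := by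
    have himg : (Finset.univ.filter fun st : Fin k × Fin k => st.1 = st.2)
        = Finset.univ.image (fun s : Fin k => (s, s)) := by
      ext ⟨s, t⟩
      simp only [Finset.mem_filter, Finset.mem_univ, true_and, Finset.mem_image, Prod.mk.injEq]
      constructor
      · rintro rfl; exact ⟨s, rfl, rfl⟩
      · rintro ⟨u, rfl, rfl⟩; rfl
    rw [himg, Finset.card_image_of_injective _ (fun a b h => congrArg Prod.fst h),
      Finset.card_univ, Fintype.card_fin]
  have hGswap : Finset.univ.filter (fun st : Fin k × Fin k => st.1 ≠ st.2)
      = G ∪ G.image Prod.swap := by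
    ext ⟨s, t⟩
    simp only [Finset.mem_filter, Finset.mem_univ, true_and, Finset.mem_union, Finset.mem_image]
    constructor
    · intro hst
      rcases hGcover s t hst with h | h
      · exact Or.inl h
      · exact Or.inr ⟨(t, s), h, rfl⟩
    · rintro (h | ⟨⟨u, v⟩, huv, heq⟩)
      · rintro rfl
        exact hGne s h
      · simp only [Prod.swap_prod_mk, Prod.mk.injEq] at heq
        obtain ⟨rfl, rfl⟩ := heq
        rintro rfl
        exact hGne _ huv
  have hdisG : Disjoint G (G.image Prod.swap) := by
    rw [Finset.disjoint_left]
    rintro ⟨s, t⟩ h1 h2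
    obtain ⟨⟨u, v⟩, huv, heq⟩ := Finset.mem_image.mp h2
    simp only [Prod.swap_prod_mk, Prod.mk.injEq] at heq
    obtain ⟨rfl, rfl⟩ := heq
    exact hGnotboth _ _ h1 huv
  have hne_card : (Finset.univ.filter fun st : Fin k × Fin k => st.1 ≠ st.2).card
      = G.card + G.card := by
    rw [hGswap, Finset.card_union_of_disjoint hdisG,
      Finset.card_image_of_injective _ Prod.swap_injective]
  have htotal : k * k = k + (G.card + G.card) := by
    have hdisj' : Disjoint (Finset.univ.filter fun st : Fin k × Fin k => st.1 = st.2)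
        (Finset.univ.filter fun st : Fin k × Fin k => st.1 ≠ st.2) := by
      rw [Finset.disjoint_left]
      intro x h1 h2
      rw [Finset.mem_filter] at h1 h2
      exact h2.2 h1.2
    have hun' : (Finset.univ.filter fun st : Fin k × Fin k => st.1 = st.2)
        ∪ (Finset.univ.filter fun st : Fin k × Fin k => st.1 ≠ st.2)
        = (Finset.univ : Finset (Fin k × Fin k)) := by
      ext x
      simp only [Finset.mem_union, Finset.mem_filter, Finset.mem_univ, true_and, iff_true]
      exact eq_or_ne _ _
    have hcc := congrArg Finset.card hun'
    rw [Finset.card_union_of_disjoint hdisj', hdiagcard, hne_card, Finset.card_univ,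
      Fintype.card_prod, Fintype.card_fin] at hcc
    omega
  have hdisMR : Disjoint M1 Rf := by
    rw [Finset.disjoint_left]
    rintro ⟨s, t⟩ h1 h2
    rw [hM1, Finset.mem_filter] at h1
    rw [hRf, Finset.mem_filter] at h2
    exact absurd h1.2.2 (lt_asymm (lt_trans h2.2 (hlt t)))
  -- the classes
  set Sm := Finset.univ.image p with hSm
  set B1 := bf.image (fun sq : Fin k × Fin n => (sq.2, (p sq.1).2)) with hB1
  set B2 := bf.image (fun sq : Fin k × Fin n => ((p sq.1).1, sq.2)) with hB2
  set Ma := M1.image (fun st : Fin k × Fin k => ((p st.2).1, (p st.1).2)) with hMa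
  set Mb := M1.image (fun st : Fin k × Fin k => ((p st.1).1, (p st.2).2)) with hMb
  set Na := Nf.image (fun st : Fin k × Fin k => ((p st.1).1, (p st.2).1)) with hNa
  set Nb := Nf.image (fun st : Fin k × Fin k => ((p st.2).2, (p st.1).2)) with hNb
  have cSm : Sm.card = k := by
    rw [hSm, Finset.card_image_of_injective _ (fun a b h => inj1 a b (congrArg Prod.fst h)),
      Finset.card_univ, Fintype.card_fin]
  have cB1 : B1.card = bf.card := by
    rw [hB1]
    apply Finset.card_image_of_injective
    rintro ⟨s, q⟩ ⟨t, r⟩ h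
    simp only [Prod.mk.injEq] at h
    exact Prod.ext_iff.mpr ⟨inj2 s t h.2, h.1⟩
  have cB2 : B2.card = bf.card := by
    rw [hB2]
    apply Finset.card_image_of_injective
    rintro ⟨s, q⟩ ⟨t, r⟩ h
    simp only [Prod.mk.injEq] at h
    exact Prod.ext_iff.mpr ⟨inj1 s t h.1, h.2⟩
  have cMa : Ma.card = M1.card := by
    rw [hMa]
    apply Finset.card_image_of_injective
    rintro ⟨s, t⟩ ⟨u, v⟩ h
    simp only [Prod.mk.injEq] at h
    exact Prod.ext_iff.mpr ⟨inj2 s u h.2, inj1 t v h.1⟩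
  have cMb : Mb.card = M1.card := by
    rw [hMb]
    apply Finset.card_image_of_injective
    rintro ⟨s, t⟩ ⟨u, v⟩ h
    simp only [Prod.mk.injEq] at h
    exact Prod.ext_iff.mpr ⟨inj1 s u h.1, inj2 t v h.2⟩
  have cNa : Na.card = Nf.card := by
    rw [hNa]
    apply Finset.card_image_of_injective
    rintro ⟨s, t⟩ ⟨u, v⟩ h
    simp only [Prod.mk.injEq] at h
    exact Prod.ext_iff.mpr ⟨inj1 s u h.1, inj1 t v h.2⟩
  have cNb : Nb.card = Nf.card := by
    rw [hNb]
    apply Finset.card_image_of_injective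
    rintro ⟨s, t⟩ ⟨u, v⟩ h
    simp only [Prod.mk.injEq] at h
    exact Prod.ext_iff.mpr ⟨inj2 s u h.2, inj2 t v h.1⟩
  -- disjointness of the classes
  have dSmB1 : Disjoint Sm B1 := by
    rw [Finset.disjoint_left]
    rintro ⟨a, b⟩ h1 h2
    obtain ⟨u, -, hu⟩ := Finset.mem_image.mp h1
    obtain ⟨⟨s, q⟩, hm, he⟩ := Finset.mem_image.mp h2
    rw [hbf, Finset.mem_filter] at hm
    exact (hm.2.2.2 u).1 ((congrArg Prod.fst he).trans (congrArg Prod.fst hu).symm)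
  have dSmB2 : Disjoint Sm B2 := by
    rw [Finset.disjoint_left]
    rintro ⟨a, b⟩ h1 h2
    obtain ⟨u, -, hu⟩ := Finset.mem_image.mp h1
    obtain ⟨⟨s, q⟩, hm, he⟩ := Finset.mem_image.mp h2
    rw [hbf, Finset.mem_filter] at hm
    exact (hm.2.2.2 u).2 ((congrArg Prod.snd he).trans (congrArg Prod.snd hu).symm)
  have dSmMa : Disjoint Sm Ma := by
    rw [Finset.disjoint_left]
    rintro ⟨a, b⟩ h1 h2
    obtain ⟨u, -, hu⟩ := Finset.mem_image.mp h1
    obtain ⟨⟨s, t⟩, hm, he⟩ := Finset.mem_image.mp h2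
    rw [hM1, Finset.mem_filter] at hm
    obtain rfl := inj1 t u ((congrArg Prod.fst he).trans (congrArg Prod.fst hu).symm)
    obtain rfl := inj2 s t ((congrArg Prod.snd he).trans (congrArg Prod.snd hu).symm)
    exact absurd hm.2.2 (lt_irrefl _)
  have dSmMb : Disjoint Sm Mb := by
    rw [Finset.disjoint_left]
    rintro ⟨a, b⟩ h1 h2
    obtain ⟨u, -, hu⟩ := Finset.mem_image.mp h1
    obtain ⟨⟨s, t⟩, hm, he⟩ := Finset.mem_image.mp h2
    rw [hM1, Finset.mem_filter] at hm
    obtain rfl := inj1 s u ((congrArg Prod.fst he).trans (congrArg Prod.fst hu).symm)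
    obtain rfl := inj2 t s ((congrArg Prod.snd he).trans (congrArg Prod.snd hu).symm)
    exact absurd hm.2.2 (lt_irrefl _)
  have dSmNa : Disjoint Sm Na := by
    rw [Finset.disjoint_left]
    rintro ⟨a, b⟩ h1 h2
    obtain ⟨u, -, hu⟩ := Finset.mem_image.mp h1
    obtain ⟨⟨s, t⟩, hm, he⟩ := Finset.mem_image.mp h2
    exact h12 t u ((congrArg Prod.snd he).trans (congrArg Prod.snd hu).symm)
  have dSmNb : Disjoint Sm Nb := by
    rw [Finset.disjoint_left]
    rintro ⟨a, b⟩ h1 h2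
    obtain ⟨u, -, hu⟩ := Finset.mem_image.mp h1
    obtain ⟨⟨s, t⟩, hm, he⟩ := Finset.mem_image.mp h2
    exact h12 u t ((congrArg Prod.fst hu).trans (congrArg Prod.fst he).symm)
  have dB1B2 : Disjoint B1 B2 := by
    rw [Finset.disjoint_left]
    rintro ⟨a, b⟩ h1 h2
    obtain ⟨⟨s, q⟩, hm, he⟩ := Finset.mem_image.mp h1
    obtain ⟨⟨s', q'⟩, hm', he'⟩ := Finset.mem_image.mp h2
    rw [hbf, Finset.mem_filter] at hm
    exact (hm.2.2.2 s').1 ((congrArg Prod.fst he).trans (congrArg Prod.fst he').symm)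
  have dB1Ma : Disjoint B1 Ma := by
    rw [Finset.disjoint_left]
    rintro ⟨a, b⟩ h1 h2
    obtain ⟨⟨s, q⟩, hm, he⟩ := Finset.mem_image.mp h1
    obtain ⟨⟨s', t'⟩, hm', he'⟩ := Finset.mem_image.mp h2
    rw [hbf, Finset.mem_filter] at hm
    exact (hm.2.2.2 t').1 ((congrArg Prod.fst he).trans (congrArg Prod.fst he').symm)
  have dB1Mb : Disjoint B1 Mb := by
    rw [Finset.disjoint_left]
    rintro ⟨a, b⟩ h1 h2
    obtain ⟨⟨s, q⟩, hm, he⟩ := Finset.mem_image.mp h1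
    obtain ⟨⟨s', t'⟩, hm', he'⟩ := Finset.mem_image.mp h2
    rw [hbf, Finset.mem_filter] at hm
    exact (hm.2.2.2 s').1 ((congrArg Prod.fst he).trans (congrArg Prod.fst he').symm)
  have dB1Na : Disjoint B1 Na := by
    rw [Finset.disjoint_left]
    rintro ⟨a, b⟩ h1 h2
    obtain ⟨⟨s, q⟩, hm, he⟩ := Finset.mem_image.mp h1
    obtain ⟨⟨s', t'⟩, hm', he'⟩ := Finset.mem_image.mp h2
    rw [hbf, Finset.mem_filter] at hm
    exact (hm.2.2.2 s').1 ((congrArg Prod.fst he).trans (congrArg Prod.fst he').symm)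
  have dB1Nb : Disjoint B1 Nb := by
    rw [Finset.disjoint_left]
    rintro ⟨a, b⟩ h1 h2
    obtain ⟨⟨s, q⟩, hm, he⟩ := Finset.mem_image.mp h1
    obtain ⟨⟨s', t'⟩, hm', he'⟩ := Finset.mem_image.mp h2
    rw [hbf, Finset.mem_filter] at hm
    exact (hm.2.2.2 t').2 ((congrArg Prod.fst he).trans (congrArg Prod.fst he').symm)
  have dB2Ma : Disjoint B2 Ma := by
    rw [Finset.disjoint_left]
    rintro ⟨a, b⟩ h1 h2
    obtain ⟨⟨s, q⟩, hm, he⟩ := Finset.mem_image.mp h1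
    obtain ⟨⟨s', t'⟩, hm', he'⟩ := Finset.mem_image.mp h2
    rw [hbf, Finset.mem_filter] at hm
    exact (hm.2.2.2 s').2 ((congrArg Prod.snd he).trans (congrArg Prod.snd he').symm)
  have dB2Mb : Disjoint B2 Mb := by
    rw [Finset.disjoint_left]
    rintro ⟨a, b⟩ h1 h2
    obtain ⟨⟨s, q⟩, hm, he⟩ := Finset.mem_image.mp h1
    obtain ⟨⟨s', t'⟩, hm', he'⟩ := Finset.mem_image.mp h2
    rw [hbf, Finset.mem_filter] at hm
    exact (hm.2.2.2 t').2 ((congrArg Prod.snd he).trans (congrArg Prod.snd he').symm)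
  have dB2Na : Disjoint B2 Na := by
    rw [Finset.disjoint_left]
    rintro ⟨a, b⟩ h1 h2
    obtain ⟨⟨s, q⟩, hm, he⟩ := Finset.mem_image.mp h1
    obtain ⟨⟨s', t'⟩, hm', he'⟩ := Finset.mem_image.mp h2
    rw [hbf, Finset.mem_filter] at hm
    exact (hm.2.2.2 t').1 ((congrArg Prod.snd he).trans (congrArg Prod.snd he').symm)
  have dB2Nb : Disjoint B2 Nb := by
    rw [Finset.disjoint_left]
    rintro ⟨a, b⟩ h1 h2
    obtain ⟨⟨s, q⟩, hm, he⟩ := Finset.mem_image.mp h1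
    obtain ⟨⟨s', t'⟩, hm', he'⟩ := Finset.mem_image.mp h2
    rw [hbf, Finset.mem_filter] at hm
    exact (hm.2.2.2 s').2 ((congrArg Prod.snd he).trans (congrArg Prod.snd he').symm)
  have dMaMb : Disjoint Ma Mb := by
    rw [Finset.disjoint_left]
    rintro ⟨a, b⟩ h1 h2
    obtain ⟨⟨s, t⟩, hm, he⟩ := Finset.mem_image.mp h1
    obtain ⟨⟨u, v⟩, hm', he'⟩ := Finset.mem_image.mp h2
    rw [hM1, Finset.mem_filter] at hm hm'
    obtain rfl := inj1 t u ((congrArg Prod.fst he).trans (congrArg Prod.fst he').symm)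
    obtain rfl := inj2 s v ((congrArg Prod.snd he).trans (congrArg Prod.snd he').symm)
    exact absurd hm'.2.2 (lt_asymm hm.2.2)
  have dMaNa : Disjoint Ma Na := by
    rw [Finset.disjoint_left]
    rintro ⟨a, b⟩ h1 h2
    obtain ⟨⟨s, t⟩, hm, he⟩ := Finset.mem_image.mp h1
    obtain ⟨⟨u, v⟩, hm', he'⟩ := Finset.mem_image.mp h2
    exact h12 v s ((congrArg Prod.snd he').trans (congrArg Prod.snd he).symm)
  have dMaNb : Disjoint Ma Nb := by
    rw [Finset.disjoint_left]
    rintro ⟨a, b⟩ h1 h2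
    obtain ⟨⟨s, t⟩, hm, he⟩ := Finset.mem_image.mp h1
    obtain ⟨⟨u, v⟩, hm', he'⟩ := Finset.mem_image.mp h2
    exact h12 t v ((congrArg Prod.fst he).trans (congrArg Prod.fst he').symm)
  have dMbNa : Disjoint Mb Na := by
    rw [Finset.disjoint_left]
    rintro ⟨a, b⟩ h1 h2
    obtain ⟨⟨s, t⟩, hm, he⟩ := Finset.mem_image.mp h1
    obtain ⟨⟨u, v⟩, hm', he'⟩ := Finset.mem_image.mp h2
    exact h12 v t ((congrArg Prod.snd he').trans (congrArg Prod.snd he).symm)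
  have dMbNb : Disjoint Mb Nb := by
    rw [Finset.disjoint_left]
    rintro ⟨a, b⟩ h1 h2
    obtain ⟨⟨s, t⟩, hm, he⟩ := Finset.mem_image.mp h1
    obtain ⟨⟨u, v⟩, hm', he'⟩ := Finset.mem_image.mp h2
    exact h12 s v ((congrArg Prod.fst he).trans (congrArg Prod.fst he').symm)
  have dNaNb : Disjoint Na Nb := by
    rw [Finset.disjoint_left]
    rintro ⟨a, b⟩ h1 h2
    obtain ⟨⟨s, t⟩, hm, he⟩ := Finset.mem_image.mp h1
    obtain ⟨⟨u, v⟩, hm', he'⟩ := Finset.mem_image.mp h2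
    exact h12 s v ((congrArg Prod.fst he).trans (congrArg Prod.fst he').symm)
  -- the partition of the inversion set
  have hun : I = Sm ∪ B1 ∪ B2 ∪ Ma ∪ Mb ∪ Na ∪ Nb := by
    apply Finset.Subset.antisymm
    · rintro ⟨a, b⟩ hab'
      rw [hIdef, Finset.mem_filter] at hab'
      obtain ⟨-, hab, hinv⟩ := hab'
      rcases classify a with ⟨s, rfl⟩ | ⟨s, rfl⟩ | hfa
      · rw [hσi s] at hinv
        rcases classify b with ⟨t, rfl⟩ | ⟨t, rfl⟩ | hfb
        · -- (i_s, i_t) : nested, Na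
          rw [hσi t] at hinv
          have hmem : ((p s).1, (p t).1) ∈ Na := by
            rw [hNa]
            refine Finset.mem_image.mpr ⟨(s, t), ?_, rfl⟩
            rw [hNf, Finset.mem_filter]
            exact ⟨Finset.mem_univ _, hab, hinv⟩
          exact Finset.mem_union_left _ (Finset.mem_union_right _ hmem)
        · -- (i_s, j_t)
          rw [hσj t] at hinv
          rcases eq_or_ne s t with rfl | hst
          · have hmem : ((p s).1, (p s).2) ∈ Sm := by
              rw [hSm]
              exact Finset.mem_image.mpr ⟨s, Finset.mem_univ _, rfl⟩
            exact Finset.mem_union_left _ (Finset.mem_union_left _ (Finset.mem_union_left _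
              (Finset.mem_union_left _ (Finset.mem_union_left _
              (Finset.mem_union_left _ hmem)))))
          · rcases lt_trichotomy (p t).2 (p s).2 with h | h | h
            · -- Mb via (s,t)
              have hmem : ((p s).1, (p t).2) ∈ Mb := by
                rw [hMb]
                refine Finset.mem_image.mpr ⟨(s, t), ?_, rfl⟩
                rw [hM1, Finset.mem_filter]
                exact ⟨Finset.mem_univ _, hab, h⟩
              exact Finset.mem_union_left _ (Finset.mem_union_left _
                (Finset.mem_union_right _ hmem))
            · exact absurd ((inj2 t s h).symm) hst
            · -- Ma via (t,s)
              have hmem : ((p s).1, (p t).2) ∈ Ma := by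
                rw [hMa]
                refine Finset.mem_image.mpr ⟨(t, s), ?_, rfl⟩
                rw [hM1, Finset.mem_filter]
                exact ⟨Finset.mem_univ _, hinv, h⟩
              exact Finset.mem_union_left _ (Finset.mem_union_left _ (Finset.mem_union_left _
                (Finset.mem_union_right _ hmem)))
        · -- (i_s, b) with b free : B2
          rw [hσf b hfb] at hinv
          have hmem : ((p s).1, b) ∈ B2 := by
            rw [hB2]
            refine Finset.mem_image.mpr ⟨(s, b), ?_, rfl⟩
            rw [hbf, Finset.mem_filter]
            exact ⟨Finset.mem_univ _, hab, hinv, hfb⟩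
          exact Finset.mem_union_left _ (Finset.mem_union_left _ (Finset.mem_union_left _
            (Finset.mem_union_left _ (Finset.mem_union_right _ hmem))))
      · rw [hσj s] at hinv
        rcases classify b with ⟨t, rfl⟩ | ⟨t, rfl⟩ | hfb
        · rw [hσi t] at hinv
          exact absurd (lt_trans (lt_trans (lt_trans hinv (hlt s)) hab) (hlt t)) (lt_irrefl _)
        · -- (j_s, j_t) : Nb via (t,s)
          rw [hσj t] at hinv
          have hmem : ((p s).2, (p t).2) ∈ Nb := by
            rw [hNb]
            refine Finset.mem_image.mpr ⟨(t, s), ?_, rfl⟩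
            rw [hNf, Finset.mem_filter]
            exact ⟨Finset.mem_univ _, hinv, hab⟩
          exact Finset.mem_union_right _ hmem
        · rw [hσf b hfb] at hinv
          exact absurd (lt_trans (lt_trans (hlt s) hab) hinv) (lt_irrefl _)
      · rw [hσf a hfa] at hinv
        rcases classify b with ⟨t, rfl⟩ | ⟨t, rfl⟩ | hfb
        · rw [hσi t] at hinv
          exact absurd (lt_trans (lt_trans hab (hlt t)) hinv) (lt_irrefl _)
        · -- (a, j_t) : B1
          rw [hσj t] at hinv
          have hmem : (a, (p t).2) ∈ B1 := by
            rw [hB1]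
            refine Finset.mem_image.mpr ⟨(t, a), ?_, rfl⟩
            rw [hbf, Finset.mem_filter]
            exact ⟨Finset.mem_univ _, hinv, hab, hfa⟩
          exact Finset.mem_union_left _ (Finset.mem_union_left _ (Finset.mem_union_left _
            (Finset.mem_union_left _ (Finset.mem_union_left _
            (Finset.mem_union_right _ hmem)))))
        · rw [hσf b hfb] at hinv
          exact absurd hinv (lt_asymm hab)
    · rintro ⟨a, b⟩ hx
      rw [hIdef, Finset.mem_filter]
      refine ⟨Finset.mem_univ _, ?_⟩
      simp only [Finset.mem_union] at hx
      rcases hx with ((((((h | h) | h) | h) | h) | h) | h)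
      · rw [hSm] at h
        obtain ⟨u, -, hu⟩ := Finset.mem_image.mp h
        obtain ⟨h1, h2⟩ := Prod.ext_iff.mp hu
        subst h1; subst h2
        exact ⟨hlt u, by rw [hσi u, hσj u]; exact hlt u⟩
      · rw [hB1] at h
        obtain ⟨⟨t, q⟩, hm, he⟩ := Finset.mem_image.mp h
        rw [hbf, Finset.mem_filter] at hm
        obtain ⟨h1, h2⟩ := Prod.ext_iff.mp he
        subst h1; subst h2
        exact ⟨hm.2.2.1, by rw [hσj t, hσf q hm.2.2.2]; exact hm.2.1⟩
      · rw [hB2] at h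
        obtain ⟨⟨t, q⟩, hm, he⟩ := Finset.mem_image.mp h
        rw [hbf, Finset.mem_filter] at hm
        obtain ⟨h1, h2⟩ := Prod.ext_iff.mp he
        subst h1; subst h2
        exact ⟨hm.2.1, by rw [hσi t, hσf q hm.2.2.2]; exact hm.2.2.1⟩
      · rw [hMa] at h
        obtain ⟨⟨s, t⟩, hm, he⟩ := Finset.mem_image.mp h
        rw [hM1, Finset.mem_filter] at hm
        obtain ⟨h1, h2⟩ := Prod.ext_iff.mp he
        subst h1; subst h2
        exact ⟨lt_trans (hlt t) hm.2.2, by rw [hσi t, hσj s]; exact hm.2.1⟩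
      · rw [hMb] at h
        obtain ⟨⟨s, t⟩, hm, he⟩ := Finset.mem_image.mp h
        rw [hM1, Finset.mem_filter] at hm
        obtain ⟨h1, h2⟩ := Prod.ext_iff.mp he
        subst h1; subst h2
        exact ⟨hm.2.1, by rw [hσi s, hσj t]; exact lt_trans (hlt t) hm.2.2⟩
      · rw [hNa] at h
        obtain ⟨⟨s, t⟩, hm, he⟩ := Finset.mem_image.mp h
        rw [hNf, Finset.mem_filter] at hm
        obtain ⟨h1, h2⟩ := Prod.ext_iff.mp he
        subst h1; subst h2
        exact ⟨hm.2.1, by rw [hσi s, hσi t]; exact hm.2.2⟩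
      · rw [hNb] at h
        obtain ⟨⟨s, t⟩, hm, he⟩ := Finset.mem_image.mp h
        rw [hNf, Finset.mem_filter] at hm
        obtain ⟨h1, h2⟩ := Prod.ext_iff.mp he
        subst h1; subst h2
        exact ⟨hm.2.2, by rw [hσj s, hσj t]; exact hm.2.1⟩
  -- card of the union
  have D6 : Disjoint (Sm ∪ B1 ∪ B2 ∪ Ma ∪ Mb ∪ Na) Nb :=
    Finset.disjoint_union_left.mpr ⟨Finset.disjoint_union_left.mpr
      ⟨Finset.disjoint_union_left.mpr ⟨Finset.disjoint_union_left.mpr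
      ⟨Finset.disjoint_union_left.mpr ⟨dSmNb, dB1Nb⟩, dB2Nb⟩, dMaNb⟩, dMbNb⟩, dNaNb⟩
  have D5 : Disjoint (Sm ∪ B1 ∪ B2 ∪ Ma ∪ Mb) Na :=
    Finset.disjoint_union_left.mpr ⟨Finset.disjoint_union_left.mpr
      ⟨Finset.disjoint_union_left.mpr ⟨Finset.disjoint_union_left.mpr
      ⟨dSmNa, dB1Na⟩, dB2Na⟩, dMaNa⟩, dMbNa⟩
  have D4 : Disjoint (Sm ∪ B1 ∪ B2 ∪ Ma) Mb :=
    Finset.disjoint_union_left.mpr ⟨Finset.disjoint_union_left.mpr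
      ⟨Finset.disjoint_union_left.mpr ⟨dSmMb, dB1Mb⟩, dB2Mb⟩, dMaMb⟩
  have D3 : Disjoint (Sm ∪ B1 ∪ B2) Ma :=
    Finset.disjoint_union_left.mpr ⟨Finset.disjoint_union_left.mpr ⟨dSmMa, dB1Ma⟩, dB2Ma⟩
  have D2 : Disjoint (Sm ∪ B1) B2 :=
    Finset.disjoint_union_left.mpr ⟨dSmB2, dB1B2⟩
  have e1 : I.card = k + bf.card + bf.card + M1.card + M1.card + Nf.card + Nf.card := by
    rw [hun, Finset.card_union_of_disjoint D6, Finset.card_union_of_disjoint D5,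
      Finset.card_union_of_disjoint D4, Finset.card_union_of_disjoint D3,
      Finset.card_union_of_disjoint D2, Finset.card_union_of_disjoint dSmB1,
      cSm, cB1, cB2, cMa, cMb, cNa, cNb]
  have e3 : k * k = k + ((M1.card + Rf.card) + (M1.card + Rf.card)) := by
    have hGc : G.card = M1.card + Rf.card := by
      rw [hG, Finset.card_union_of_disjoint hdisMR]
    rw [← hGc]; exact htotal
  have hsq : (2 : ℤ) * (k : ℤ) ^ 2 = 2 * ((k * k : ℕ) : ℤ) := by push_cast; ring
  rw [hsq]
  have z1 : (I.card : ℤ) = k + bf.card + bf.card + M1.card + M1.card + Nf.card + Nf.card := by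
    exact_mod_cast e1
  have z2 : (M1.card : ℤ) = Cf.card + Nf.card := by exact_mod_cast hM1card
  have z3 : ((k * k : ℕ) : ℤ) = k + ((M1.card + Rf.card) + (M1.card + Rf.card)) := by
    exact_mod_cast e3
  linarith [z1, z2, z3]
end

section
/- Let n ≥ 2, let σ' ∈ S_n be an involution that is the product of k−1 pairwise disjoint transpositions (i_1,j_1),…,(i_{k-1},j_{k-1}) with i_s < j_s < n for all s, and let i < n be an index that is not an endpoint of any of these transpositions. Set σ = σ'·(i,n) and c = #{s : i_s < i < j_s}. Then inv(σ) = inv(σ') + 2(n−i) − 1 − 2c, where inv denotes the number of inversions. -/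
open Finset

private lemma prod_swap_fixed {n : ℕ} (l : List (Fin n × Fin n)) (x : Fin n)
    (h : ∀ q ∈ l, x ≠ q.1 ∧ x ≠ q.2) :
    (l.map fun q => Equiv.swap q.1 q.2).prod x = x := by
  induction l with
  | nil => simp
  | cons q l ih =>
    simp only [List.map_cons, List.prod_cons, Equiv.Perm.mul_apply]
    rw [ih fun r hr => h r (List.mem_cons_of_mem _ hr)]
    exact Equiv.swap_apply_of_ne_of_ne (h q (List.mem_cons_self)).1
      (h q (List.mem_cons_self)).2

private lemma prod_swap_left {n : ℕ} (l : List (Fin n × Fin n))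
    (hd : l.Pairwise fun q r => q.1 ≠ r.1 ∧ q.1 ≠ r.2 ∧ q.2 ≠ r.1 ∧ q.2 ≠ r.2)
    (q : Fin n × Fin n) (hq : q ∈ l) :
    (l.map fun r => Equiv.swap r.1 r.2).prod q.1 = q.2 ∧
    (l.map fun r => Equiv.swap r.1 r.2).prod q.2 = q.1 := by
  induction l with
  | nil => simp at hq
  | cons r l ih =>
    obtain ⟨h1, h2⟩ := List.pairwise_cons.1 hd
    simp only [List.map_cons, List.prod_cons, Equiv.Perm.mul_apply]
    rcases List.mem_cons.1 hq with h | h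
    · subst h
      rw [prod_swap_fixed l q.1 fun r hr => ⟨(h1 r hr).1, (h1 r hr).2.1⟩,
        prod_swap_fixed l q.2 fun r hr => ⟨(h1 r hr).2.2.1, (h1 r hr).2.2.2⟩]
      simp
    · have hne := h1 q h
      obtain ⟨e1, e2⟩ := ih h2 h
      rw [e1, e2]
      exact ⟨Equiv.swap_apply_of_ne_of_ne (Ne.symm hne.2.1) (Ne.symm hne.2.2.2),
        Equiv.swap_apply_of_ne_of_ne (Ne.symm hne.1) (Ne.symm hne.2.2.1)⟩

/-- Let `σ' ∈ Sₙ` (`n ≥ 2`) be an involution that is the product of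
pairwise disjoint transpositions `(iₛ, jₛ)` with `iₛ < jₛ < n` (encoded on `Fin n`,
so the letter `n` is `⟨n − 1, _⟩`), and let `i < n` not be an endpoint of any of them.
Set `σ = σ'·(i, n)` and `c = #{s : iₛ < i < jₛ}`.  Then
`inv(σ) = inv(σ') + 2(n − i) − 1 − 2c`. -/
theorem inversions_of_extended_involution (n : ℕ) (hn : 2 ≤ n) (m : ℕ)
    (p : Fin m → Fin n × Fin n)
    (hlt : ∀ s, (p s).1 < (p s).2)
    (htop : ∀ s, ((p s).2 : ℕ) < n - 1)
    (hdisj : ∀ s t : Fin m, s ≠ t →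
      (p s).1 ≠ (p t).1 ∧ (p s).1 ≠ (p t).2 ∧ (p s).2 ≠ (p t).1 ∧ (p s).2 ≠ (p t).2)
    (i : Fin n) (hi : (i : ℕ) < n - 1)
    (hfix : ∀ s : Fin m, i ≠ (p s).1 ∧ i ≠ (p s).2)
    (σ' σ : Equiv.Perm (Fin n))
    (hσ' : σ' = (List.ofFn fun s => Equiv.swap (p s).1 (p s).2).prod)
    (hσ : σ = σ' * Equiv.swap i (⟨n - 1, by omega⟩ : Fin n)) :
    ((Finset.univ.filter fun st : Fin n × Fin n =>
        st.1 < st.2 ∧ σ st.2 < σ st.1).card : ℤ) =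
      ((Finset.univ.filter fun st : Fin n × Fin n =>
        st.1 < st.2 ∧ σ' st.2 < σ' st.1).card : ℤ)
      + 2 * ((n : ℤ) - 1 - (i : ℕ)) - 1
      - 2 * ((Finset.univ.filter fun s : Fin m =>
          (p s).1 < i ∧ i < (p s).2).card : ℤ) := by
  have hn1 : 0 < n := by omega
  set top : Fin n := ⟨n - 1, by omega⟩ with htop_def
  have hσt : σ = σ' * Equiv.swap i top := hσ
  have htopval : (top : ℕ) = n - 1 := rfl
  have hitop : i < top := by rw [Fin.lt_def, htopval]; exact hi
  have hletop : ∀ x : Fin n, x ≤ top := fun x => by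
    rw [Fin.le_def, htopval]; have := x.2; omega
  -- structure of σ'
  have hmap : σ' = ((List.ofFn p).map fun q => Equiv.swap q.1 q.2).prod := by
    rw [hσ', List.map_ofFn]; rfl
  have hpair : (List.ofFn p).Pairwise
      fun q r => q.1 ≠ r.1 ∧ q.1 ≠ r.2 ∧ q.2 ≠ r.1 ∧ q.2 ≠ r.2 :=
    List.pairwise_ofFn.2 fun s t hst => hdisj s t (ne_of_lt hst)
  have hfixpt : ∀ x : Fin n, (∀ s, x ≠ (p s).1 ∧ x ≠ (p s).2) → σ' x = x := by
    intro x hx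
    rw [hmap]
    refine prod_swap_fixed _ _ ?_
    intro q hq
    obtain ⟨s, rfl⟩ := List.mem_ofFn.1 hq
    exact hx s
  have hsw : ∀ s, σ' (p s).1 = (p s).2 ∧ σ' (p s).2 = (p s).1 := by
    intro s
    rw [hmap]
    exact prod_swap_left _ hpair _ (List.mem_ofFn.2 ⟨s, rfl⟩)
  have hσ'i : σ' i = i := hfixpt i hfix
  have hσ'top : σ' top = top := by
    refine hfixpt top fun s => ?_
    have h1 := (hlt s)
    have h2 := htop s
    rw [Fin.lt_def] at h1
    constructor
    · exact fun h => by have := congrArg Fin.val h; rw [htopval] at this; omega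
    · exact fun h => by have := congrArg Fin.val h; rw [htopval] at this; omega
  have hσi : σ i = top := by
    rw [hσt, Equiv.Perm.mul_apply, Equiv.swap_apply_left, hσ'top]
  have hσtop : σ top = i := by
    rw [hσt, Equiv.Perm.mul_apply, Equiv.swap_apply_right, hσ'i]
  have hσx : ∀ x : Fin n, x ≠ i → x ≠ top → σ x = σ' x := by
    intro x h1 h2
    rw [hσt, Equiv.Perm.mul_apply, Equiv.swap_apply_of_ne_of_ne h1 h2]
  have hinj_i : ∀ x, σ' x = i → x = i := fun x h => σ'.injective (h.trans hσ'i.symm)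
  have hinj_top : ∀ x, σ' x = top → x = top := fun x h => σ'.injective (h.trans hσ'top.symm)
  have hmoved : ∀ x : Fin n, σ' x ≠ x → ∃ s, x = (p s).1 ∨ x = (p s).2 := by
    intro x hx
    by_contra hc
    push_neg at hc
    exact hx (hfixpt x hc)
  -- Claim 1
  have hc1 : (univ.filter fun a : Fin n => a < i ∧ i < σ' a).card
      = (univ.filter fun s : Fin m => (p s).1 < i ∧ i < (p s).2).card := by
    refine (Finset.card_bij (fun s _ => (p s).1) ?_ ?_ ?_).symm
    · intro s hs
      simp only [mem_filter, mem_univ, true_and] at hs ⊢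
      exact ⟨hs.1, by rw [(hsw s).1]; exact hs.2⟩
    · intro s _ t _ h
      by_contra hne
      exact (hdisj s t hne).1 h
    · intro a ha
      simp only [mem_filter, mem_univ, true_and] at ha
      obtain ⟨h1, h2⟩ := ha
      have hm : σ' a ≠ a := by
        intro h; rw [h] at h2; exact absurd h2 (not_lt.2 h1.le)
      obtain ⟨s, hs | hs⟩ := hmoved a hm
      · refine ⟨s, ?_, hs.symm⟩
        simp only [mem_filter, mem_univ, true_and]
        rw [hs] at h1 h2
        exact ⟨h1, (hsw s).1 ▸ h2⟩
      · exfalso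
        rw [hs] at h1 h2
        rw [(hsw s).2] at h2
        exact absurd (lt_trans h2 (lt_trans (hlt s) h1)) (lt_irrefl i)
  -- Claim 2
  have hc2 : (univ.filter fun a : Fin n => i < a ∧ a < top ∧ σ' a < i).card
      = (univ.filter fun s : Fin m => (p s).1 < i ∧ i < (p s).2).card := by
    refine (Finset.card_bij (fun s _ => (p s).2) ?_ ?_ ?_).symm
    · intro s hs
      simp only [mem_filter, mem_univ, true_and] at hs ⊢
      refine ⟨hs.2, ?_, by rw [(hsw s).2]; exact hs.1⟩
      rw [Fin.lt_def, htopval]; exact htop s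
    · intro s _ t _ h
      by_contra hne
      exact (hdisj s t hne).2.2.2 h
    · intro a ha
      simp only [mem_filter, mem_univ, true_and] at ha
      obtain ⟨h1, h2, h3⟩ := ha
      have hm : σ' a ≠ a := by
        intro h; rw [h] at h3; exact absurd h3 (not_lt.2 h1.le)
      obtain ⟨s, hs | hs⟩ := hmoved a hm
      · exfalso
        rw [hs] at h1 h3
        rw [(hsw s).1] at h3
        exact absurd (lt_trans h1 (lt_trans (hlt s) h3)) (lt_irrefl i)
      · refine ⟨s, ?_, hs.symm⟩
        simp only [mem_filter, mem_univ, true_and]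
        rw [hs] at h1 h3
        rw [(hsw s).2] at h3
        exact ⟨h3, h1⟩
  -- Claim 3
  have hc3 : (univ.filter fun a : Fin n => i < a ∧ a < top).card = n - 1 - (i : ℕ) - 1 := by
    rw [← Nat.card_Ioo (i : ℕ) (n - 1)]
    refine Finset.card_bij (fun a _ => (a : ℕ)) ?_ ?_ ?_
    · intro a ha
      simp only [mem_filter, mem_univ, true_and, Fin.lt_def, htopval] at ha
      simp only [Finset.mem_Ioo]
      exact ha
    · intro a _ b _ h
      exact Fin.val_injective h
    · intro b hb
      simp only [Finset.mem_Ioo] at hb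
      refine ⟨⟨b, by omega⟩, ?_, rfl⟩
      simp only [mem_filter, mem_univ, true_and, Fin.lt_def, htopval]
      exact hb
  -- master pointwise identity
  have master : ∀ a b : Fin n,
      ((if a < b ∧ σ b < σ a then (1:ℤ) else 0) - (if a < b ∧ σ' b < σ' a then 1 else 0))
      = (if b = top ∧ (a < top ∧ i < σ a) then 1 else 0)
        - (if b = i ∧ (a < i ∧ i < σ' a) then 1 else 0)
        + (if a = i ∧ (i < b ∧ b < top ∧ i < σ' b) then 1 else 0) := by
    intro a b
    by_cases hb : b = top
    · subst hb
      rw [hσtop, hσ'top]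
      simp [not_lt.2 (hletop (σ' a)), hitop.ne', lt_irrefl]
    · by_cases hb2 : b = i
      · subst hb2
        rw [hσi, hσ'i]
        simp [not_lt.2 (hletop (σ a)), hitop.ne, lt_irrefl, hb]
      · have hσb : σ b = σ' b := hσx b hb2 hb
        have hbtop : b < top := lt_of_le_of_ne (hletop b) hb
        have hσ'bt : σ' b < top := lt_of_le_of_ne (hletop _) fun h => hb (hinj_top b h)
        have hσ'bi : σ' b ≠ i := fun h => hb2 (hinj_i b h)
        by_cases ha : a = i
        · subst ha
          rw [hσi, hσb]
          by_cases hib : a < b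
          · by_cases h4 : σ' b < a
            · simp [hib, h4, hb, hb2, hσ'bt, hbtop, asymm h4, hσ'i]
            · have h5 : a < σ' b := lt_of_le_of_ne (not_lt.1 h4) (Ne.symm hσ'bi)
              simp [hib, h4, h5, hb, hb2, hσ'bt, hbtop, hσ'i]
          · simp [hib, hb, hb2]
        · by_cases hat : a = top
          · subst hat
            simp [not_lt.2 (hletop b), hb, hb2, hitop.ne', ha]
          · have hσa : σ a = σ' a := hσx a ha hat
            rw [hσa, hσb]
            simp [hb, hb2, ha]
  -- sums over pair space
  have sumA : ∑ st : Fin n × Fin n,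
      (if st.2 = top ∧ (st.1 < top ∧ i < σ st.1) then (1:ℤ) else 0)
      = ((univ.filter fun a : Fin n => a < top ∧ i < σ a).card : ℤ) := by
    rw [Fintype.sum_prod_type, ← Finset.sum_boole]
    refine Finset.sum_congr rfl fun x _ => ?_
    simp [ite_and, Finset.sum_ite_eq']
  have sumB : ∑ st : Fin n × Fin n,
      (if st.2 = i ∧ (st.1 < i ∧ i < σ' st.1) then (1:ℤ) else 0)
      = ((univ.filter fun a : Fin n => a < i ∧ i < σ' a).card : ℤ) := by
    rw [Fintype.sum_prod_type, ← Finset.sum_boole]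
    refine Finset.sum_congr rfl fun x _ => ?_
    simp [ite_and, Finset.sum_ite_eq']
  have sumC : ∑ st : Fin n × Fin n,
      (if st.1 = i ∧ (i < st.2 ∧ st.2 < top ∧ i < σ' st.2) then (1:ℤ) else 0)
      = ((univ.filter fun b : Fin n => i < b ∧ b < top ∧ i < σ' b).card : ℤ) := by
    rw [Fintype.sum_prod_type_right, ← Finset.sum_boole]
    refine Finset.sum_congr rfl fun y _ => ?_
    simp [ite_and, Finset.sum_ite_eq']
  have key : ((univ.filter fun st : Fin n × Fin n => st.1 < st.2 ∧ σ st.2 < σ st.1).card : ℤ)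
      - ((univ.filter fun st : Fin n × Fin n => st.1 < st.2 ∧ σ' st.2 < σ' st.1).card : ℤ)
      = ((univ.filter fun a : Fin n => a < top ∧ i < σ a).card : ℤ)
        - ((univ.filter fun a : Fin n => a < i ∧ i < σ' a).card : ℤ)
        + ((univ.filter fun b : Fin n => i < b ∧ b < top ∧ i < σ' b).card : ℤ) := by
    rw [← Finset.sum_boole (fun st : Fin n × Fin n => st.1 < st.2 ∧ σ st.2 < σ st.1) univ,
        ← Finset.sum_boole (fun st : Fin n × Fin n => st.1 < st.2 ∧ σ' st.2 < σ' st.1) univ,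
        ← sumA, ← sumB, ← sumC,
        ← Finset.sum_sub_distrib, ← Finset.sum_sub_distrib, ← Finset.sum_add_distrib]
    exact Finset.sum_congr rfl fun st _ => master st.1 st.2
  -- splitting {a < top ∧ i < σ a}
  have ptK : ∀ a : Fin n, (if a < top ∧ i < σ a then (1:ℤ) else 0)
      = (if a = i then 1 else 0) + (if a < i ∧ i < σ' a then 1 else 0)
        + (if i < a ∧ a < top ∧ i < σ' a then 1 else 0) := by
    intro a
    by_cases ha : a = i
    · subst ha; simp [hitop, hσi, lt_irrefl]
    · by_cases hat : a = top
      · subst hat; simp [lt_irrefl, ha, not_lt.2 hitop.le]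
      · have hσa : σ a = σ' a := hσx a ha hat
        have hat' : a < top := lt_of_le_of_ne (hletop a) hat
        rw [hσa]
        rcases lt_trichotomy a i with h | h | h
        · simp [h, hat', asymm h, ha]
        · exact absurd h ha
        · simp [h, hat', not_lt.2 h.le, ha]
  have sumK : ((univ.filter fun a : Fin n => a < top ∧ i < σ a).card : ℤ)
      = 1 + ((univ.filter fun a : Fin n => a < i ∧ i < σ' a).card : ℤ)
        + ((univ.filter fun a : Fin n => i < a ∧ a < top ∧ i < σ' a).card : ℤ) := by
    rw [← Finset.sum_boole, ← Finset.sum_boole, ← Finset.sum_boole,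
      Finset.sum_congr rfl fun a (_ : a ∈ univ) => ptK a,
      Finset.sum_add_distrib, Finset.sum_add_distrib]
    simp [Finset.sum_ite_eq']
  -- splitting the interval (i, top)
  have ptIoo : ∀ a : Fin n, (if i < a ∧ a < top then (1:ℤ) else 0)
      = (if i < a ∧ a < top ∧ σ' a < i then 1 else 0)
        + (if i < a ∧ a < top ∧ i < σ' a then 1 else 0) := by
    intro a
    by_cases h1 : i < a
    · by_cases h2 : a < top
      · have hne : σ' a ≠ i := fun h => h1.ne' (hinj_i a h)
        rcases lt_trichotomy (σ' a) i with h3 | h3 | h3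
        · simp [h1, h2, h3, asymm h3]
        · exact absurd h3 hne
        · simp [h1, h2, h3, asymm h3]
      · simp [h2]
    · simp [h1]
  have sumIoo : ((univ.filter fun a : Fin n => i < a ∧ a < top).card : ℤ)
      = ((univ.filter fun a : Fin n => i < a ∧ a < top ∧ σ' a < i).card : ℤ)
        + ((univ.filter fun a : Fin n => i < a ∧ a < top ∧ i < σ' a).card : ℤ) := by
    rw [← Finset.sum_boole, ← Finset.sum_boole, ← Finset.sum_boole,
      Finset.sum_congr rfl fun a (_ : a ∈ univ) => ptIoo a,
      Finset.sum_add_distrib]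
  -- arithmetic
  have hc1' : ((univ.filter fun a : Fin n => a < i ∧ i < σ' a).card : ℤ)
      = ((univ.filter fun s : Fin m => (p s).1 < i ∧ i < (p s).2).card : ℤ) := by
    exact_mod_cast hc1
  have hc2' : ((univ.filter fun a : Fin n => i < a ∧ a < top ∧ σ' a < i).card : ℤ)
      = ((univ.filter fun s : Fin m => (p s).1 < i ∧ i < (p s).2).card : ℤ) := by
    exact_mod_cast hc2
  have hc3' : ((univ.filter fun a : Fin n => i < a ∧ a < top).card : ℤ)
      = (n : ℤ) - 2 - (i : ℕ) := by
    rw [hc3]; omega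
  linarith [key, sumK, sumIoo, hc1', hc2', hc3']
end

section
/- Let S' be a link pattern on vertex set {1,…,n} with arcs (i_1,j_1),…,(i_{k-1},j_{k-1}) all of whose endpoints are < n, let i < n not be an endpoint of any arc, and let S = S' ∪ {(i,n)}. Put c(i,n) = #{s : i_s < i < j_s} and u(i,n) = #{s : i < i_s (and hence i < i_s < j_s < n)}. Then b(S) = b(S') + (n − 1 − i) − 2·c(i,n) − 2·u(i,n). -/
open Finset


/-- The bridge number of a link pattern on vertex set `{1, …, n}` with arcs
`p 0, …, p (m-1)`: the number of pairs (arc `(aₛ, bₛ)`, vertex `v`) such that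
`aₛ < v < bₛ` and `v` is a fixed point (not an endpoint of any arc). -/
def bridgeNum (n : ℕ) {m : ℕ} (p : Fin m → ℕ × ℕ) : ℕ :=
  ((Finset.univ ×ˢ Finset.Icc 1 n).filter fun sv : Fin m × ℕ =>
    (p sv.1).1 < sv.2 ∧ sv.2 < (p sv.1).2 ∧
      ∀ t : Fin m, sv.2 ≠ (p t).1 ∧ sv.2 ≠ (p t).2).card

/-- Let `S'` be a link pattern on `{1, …, n}` with arcs `(iₛ, jₛ)`
all of whose endpoints are `< n`, let `i < n` not be an endpoint of any arc, and let
`S = S' ∪ {(i, n)}`.  With `c(i,n) = #{s : iₛ < i < jₛ}` and `u(i,n) = #{s : i < iₛ}`,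
one has `b(S) = b(S') + (n − 1 − i) − 2·c(i,n) − 2·u(i,n)`. -/
theorem bridgeNum_snoc (n m : ℕ)
    (p : Fin m → ℕ × ℕ)
    (hp : ∀ s, 1 ≤ (p s).1 ∧ (p s).1 < (p s).2 ∧ (p s).2 < n)
    (hdisj : ∀ s t : Fin m, s ≠ t →
      (p s).1 ≠ (p t).1 ∧ (p s).1 ≠ (p t).2 ∧ (p s).2 ≠ (p t).1 ∧ (p s).2 ≠ (p t).2)
    (i : ℕ) (hi1 : 1 ≤ i) (hin : i < n)
    (hfix : ∀ s : Fin m, i ≠ (p s).1 ∧ i ≠ (p s).2)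
    (q : Fin (m + 1) → ℕ × ℕ) (hq : q = Fin.snoc p (i, n)) :
    (bridgeNum n q : ℤ) = (bridgeNum n p : ℤ) + ((n : ℤ) - 1 - (i : ℤ))
      - 2 * ((Finset.univ.filter fun s : Fin m =>
          (p s).1 < i ∧ i < (p s).2).card : ℤ)
      - 2 * ((Finset.univ.filter fun s : Fin m => i < (p s).1).card : ℤ) := by
  classical
  subst hq
  set V := Finset.Icc 1 n with hV
  set fixP : ℕ → Prop := fun v => ∀ t : Fin m, v ≠ (p t).1 ∧ v ≠ (p t).2 with hfixP
  set Q : Fin (m+1) → ℕ × ℕ := Fin.snoc p (i, n) with hQ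
  have hQcast : ∀ s : Fin m, Q s.castSucc = p s := fun s => Fin.snoc_castSucc _ _ _
  have hQlast : Q (Fin.last m) = (i, n) := Fin.snoc_last _ _
  have fixQ_iff : ∀ v, (∀ t : Fin (m+1), v ≠ (Q t).1 ∧ v ≠ (Q t).2)
      ↔ (fixP v ∧ v ≠ i ∧ v ≠ n) := by
    intro v
    constructor
    · intro h
      refine ⟨fun t => by simpa [hQcast t] using h t.castSucc, ?_, ?_⟩
      · simpa [hQlast] using (h (Fin.last m)).1
      · simpa [hQlast] using (h (Fin.last m)).2
    · rintro ⟨h1, h2, h3⟩ t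
      refine Fin.lastCases ?_ ?_ t
      · simp [hQlast, h2, h3]
      · intro t'; simpa [hQcast t'] using h1 t'
  -- expand bridgeNum as sums
  have hbq : bridgeNum n Q = ∑ s : Fin (m+1),
      (V.filter fun v => (Q s).1 < v ∧ v < (Q s).2 ∧
        ∀ t : Fin (m+1), v ≠ (Q t).1 ∧ v ≠ (Q t).2).card := by
    unfold bridgeNum
    rw [Finset.card_filter, Finset.sum_product]
    exact Finset.sum_congr rfl fun a _ => (Finset.card_filter _ _).symm
  have hbp : bridgeNum n p = ∑ s : Fin m,
      (V.filter fun v => (p s).1 < v ∧ v < (p s).2 ∧ fixP v).card := by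
    unfold bridgeNum
    rw [Finset.card_filter, Finset.sum_product]
    exact Finset.sum_congr rfl fun a _ => (Finset.card_filter _ _).symm
  set c := (Finset.univ.filter fun s : Fin m => (p s).1 < i ∧ i < (p s).2).card with hc
  set u := (Finset.univ.filter fun s : Fin m => i < (p s).1).card with hu
  -- last term
  have hlast_set : (V.filter fun v => (Q (Fin.last m)).1 < v ∧ v < (Q (Fin.last m)).2 ∧
      ∀ t : Fin (m+1), v ≠ (Q t).1 ∧ v ≠ (Q t).2) = (Finset.Ioo i n).filter fixP := by
    ext v
    simp only [hQlast, mem_filter, mem_Icc, mem_Ioo, fixQ_iff, hV]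
    constructor
    · rintro ⟨⟨h1, h2⟩, h3, h4, h5, _, _⟩; exact ⟨⟨h3, h4⟩, h5⟩
    · rintro ⟨⟨h3, h4⟩, h5⟩
      exact ⟨⟨by omega, by omega⟩, h3, h4, h5, by omega, by omega⟩
  have hsplit : ((Finset.Ioo i n).filter fixP).card
      + ((Finset.Ioo i n).filter fun v => ¬ fixP v).card = n - i - 1 := by
    rw [Finset.card_filter_add_card_filter_not, Nat.card_Ioo]
  -- the non-fixed points of Ioo i n
  have hN : ((Finset.Ioo i n).filter fun v => ¬ fixP v)
      = Finset.univ.biUnion (fun t : Fin m =>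
          (Finset.Ioo i n).filter fun v => v = (p t).1 ∨ v = (p t).2) := by
    ext v
    simp only [mem_filter, mem_biUnion, mem_univ, true_and, hfixP]
    constructor
    · rintro ⟨hv, hnf⟩
      push_neg at hnf
      obtain ⟨t, ht⟩ := hnf
      by_cases h : v = (p t).1
      · exact ⟨t, hv, Or.inl h⟩
      · exact ⟨t, hv, Or.inr (ht h)⟩
    · rintro ⟨t, hv, h⟩
      refine ⟨hv, fun hf => ?_⟩
      rcases h with h | h
      · exact (hf t).1 h
      · exact (hf t).2 h
  have hNcard : ((Finset.Ioo i n).filter fun v => ¬ fixP v).card = 2 * u + c := by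
    rw [hN, Finset.card_biUnion]
    · have hterm : ∀ t : Fin m,
          ((Finset.Ioo i n).filter fun v => v = (p t).1 ∨ v = (p t).2).card
            = (if i < (p t).1 then 2 else 0)
              + (if (p t).1 < i ∧ i < (p t).2 then 1 else 0) := by
        intro t
        obtain ⟨h1, h2, h3⟩ := hp t
        obtain ⟨h4, h5⟩ := hfix t
        by_cases hca : i < (p t).1
        · have hset : ((Finset.Ioo i n).filter fun v => v = (p t).1 ∨ v = (p t).2)
              = {(p t).1, (p t).2} := by
            ext v
            simp only [mem_filter, mem_Ioo, mem_insert, mem_singleton]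
            omega
          rw [hset, Finset.card_pair (by omega)]
          split_ifs <;> omega
        · by_cases hcb : i < (p t).2
          · have hset : ((Finset.Ioo i n).filter fun v => v = (p t).1 ∨ v = (p t).2)
                = {(p t).2} := by
              ext v
              simp only [mem_filter, mem_Ioo, mem_singleton]
              omega
            rw [hset, Finset.card_singleton]
            split_ifs <;> omega
          · have hset : ((Finset.Ioo i n).filter fun v => v = (p t).1 ∨ v = (p t).2)
                = ∅ := by
              ext v
              simp only [mem_filter, mem_Ioo, notMem_empty, iff_false, not_and, not_or]
              omega
            rw [hset, Finset.card_empty]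
            split_ifs <;> omega
      rw [Finset.sum_congr rfl fun t _ => hterm t, Finset.sum_add_distrib]
      congr 1
      · have : ∀ t : Fin m, (if i < (p t).1 then 2 else 0)
            = 2 * (if i < (p t).1 then 1 else 0) := by intro t; split_ifs <;> rfl
        rw [Finset.sum_congr rfl fun t _ => this t, ← Finset.mul_sum, hu,
          Finset.card_filter]
      · rw [hc, Finset.card_filter]
    · intro s _ t _ hst
      obtain ⟨d1, d2, d3, d4⟩ := hdisj s t hst
      simp only [Finset.disjoint_left, mem_filter]
      rintro v ⟨_, hv1⟩ ⟨_, hv2⟩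
      rcases hv1 with h | h <;> rcases hv2 with h' | h' <;> omega
  -- per-arc relation
  have hB : ∀ s : Fin m,
      (V.filter fun v => (Q s.castSucc).1 < v ∧ v < (Q s.castSucc).2 ∧
        ∀ t : Fin (m+1), v ≠ (Q t).1 ∧ v ≠ (Q t).2).card
      + (if (p s).1 < i ∧ i < (p s).2 then 1 else 0)
      = (V.filter fun v => (p s).1 < v ∧ v < (p s).2 ∧ fixP v).card := by
    intro s
    obtain ⟨h1, h2, h3⟩ := hp s
    have hset : (V.filter fun v => (Q s.castSucc).1 < v ∧ v < (Q s.castSucc).2 ∧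
        ∀ t : Fin (m+1), v ≠ (Q t).1 ∧ v ≠ (Q t).2)
        = (V.filter fun v => (p s).1 < v ∧ v < (p s).2 ∧ fixP v).erase i := by
      ext v
      simp only [hQcast s, mem_erase, mem_filter, fixQ_iff, hV, mem_Icc]
      constructor
      · rintro ⟨hv, ha, hb, hf, hne, _⟩; exact ⟨hne, hv, ha, hb, hf⟩
      · rintro ⟨hne, hv, ha, hb, hf⟩
        exact ⟨hv, ha, hb, hf, hne, by omega⟩
    rw [hset]
    by_cases hcs : (p s).1 < i ∧ i < (p s).2
    · have hi_mem : i ∈ V.filter fun v => (p s).1 < v ∧ v < (p s).2 ∧ fixP v := by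
        simp only [mem_filter, hV, mem_Icc]
        exact ⟨⟨hi1, hin.le⟩, hcs.1, hcs.2, hfix⟩
      rw [if_pos hcs, Finset.card_erase_add_one hi_mem]
    · rw [if_neg hcs, Finset.erase_eq_of_notMem, add_zero]
      simp only [mem_filter]
      rintro ⟨_, ha, hb, _⟩
      exact hcs ⟨ha, hb⟩
  -- assemble
  rw [hbq, Fin.sum_univ_castSucc] at *
  have hsumB : (∑ s : Fin m,
      (V.filter fun v => (Q s.castSucc).1 < v ∧ v < (Q s.castSucc).2 ∧
        ∀ t : Fin (m+1), v ≠ (Q t).1 ∧ v ≠ (Q t).2).card) + c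
      = bridgeNum n p := by
    rw [hbp, hc, Finset.card_filter, ← Finset.sum_add_distrib]
    exact Finset.sum_congr rfl fun s _ => hB s
  rw [hlast_set] at *
  omega
end

section
/- Fix 1 ≤ k < n and let ŵ ∈ S_n be defined by ŵ(t) = k+1−t for 1 ≤ t ≤ k and ŵ(t) = n+k+1−t for k+1 ≤ t ≤ n (the longest element of S_k × S_{[k+1,n]}). Let S' be a set of pairwise disjoint pairs (i_s,j_s) with i_s ≤ k < j_s, and let (i,j) with i ≤ k < j be disjoint from all pairs of S'. Let σ_{S'} and σ_{S'∪{(i,j)}} be the products of the corresponding transpositions. Then ŵ·σ_{S'}·ŵ < ŵ·σ_{S'∪{(i,j)}}·ŵ strictly in the Bruhat order on S_n. -/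
/-- The Bruhat order on `Sₙ`, via the standard dot-criterion characterization:
`u ≤ v` iff for all `p, q`, `#{a ≤ p : u a ≥ q} ≤ #{a ≤ p : v a ≥ q}`. -/
def bruhatLE {n : ℕ} (u v : Equiv.Perm (Fin n)) : Prop :=
  ∀ p q : Fin n,
    (Finset.univ.filter fun a : Fin n => a ≤ p ∧ q ≤ u a).card ≤
      (Finset.univ.filter fun a : Fin n => a ≤ p ∧ q ≤ v a).card

/-- The strict Bruhat order on `Sₙ`. -/
def bruhatLT {n : ℕ} (u v : Equiv.Perm (Fin n)) : Prop :=
  bruhatLE u v ∧ u ≠ v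

lemma prod_fix_aux {n : ℕ} (l : List (Equiv.Perm (Fin n))) (x : Fin n)
    (h : ∀ g ∈ l, g x = x) : l.prod x = x := by
  induction l with
  | nil => simp
  | cons g l ih =>
    have h1 : l.prod x = x := ih fun g hg => h g (List.mem_cons_of_mem _ hg)
    simp [Equiv.Perm.mul_apply, h1, h g List.mem_cons_self]

lemma key_aux {n : ℕ} (u : Equiv.Perm (Fin n)) (a b : Fin n) (hab : a < b)
    (hua : u a = a) (hub : u b = b) : bruhatLT u (Equiv.swap a b * u) := by
  have hab' : a ≠ b := ne_of_lt hab
  constructor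
  · intro pp q
    have hmem : ∀ x : Fin n, x ≠ a → x ≠ b → (Equiv.swap a b * u) x = u x := by
      intro x hxa hxb
      simp only [Equiv.Perm.mul_apply]
      apply Equiv.swap_apply_of_ne_of_ne
      · exact fun h => hxa (u.injective (by rw [h, hua]))
      · exact fun h => hxb (u.injective (by rw [h, hub]))
    have hva : (Equiv.swap a b * u) a = b := by
      simp [Equiv.Perm.mul_apply, hua]
    have hvb : (Equiv.swap a b * u) b = a := by
      simp [Equiv.Perm.mul_apply, hub]
    rw [Finset.card_filter, Finset.card_filter]
    have hsplit : ∀ f : Fin n → ℕ, ∑ x, f x =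
        ∑ x ∈ (Finset.univ.erase a).erase b, f x + f b + f a := by
      intro f
      rw [Finset.sum_erase_add _ _ (Finset.mem_erase.mpr ⟨hab'.symm, Finset.mem_univ b⟩),
        Finset.sum_erase_add _ _ (Finset.mem_univ a)]
    rw [hsplit, hsplit]
    have hS : ∑ x ∈ (Finset.univ.erase a).erase b,
        (if x ≤ pp ∧ q ≤ u x then 1 else 0) =
        ∑ x ∈ (Finset.univ.erase a).erase b,
        (if x ≤ pp ∧ q ≤ (Equiv.swap a b * u) x then 1 else 0) := by
      apply Finset.sum_congr rfl
      intro x hx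
      rw [Finset.mem_erase] at hx
      rw [hmem x (Finset.mem_erase.mp hx.2).1 hx.1]
    rw [hS]
    have hkey : (if b ≤ pp ∧ q ≤ u b then 1 else 0) + (if a ≤ pp ∧ q ≤ u a then 1 else 0) ≤
        (if b ≤ pp ∧ q ≤ (Equiv.swap a b * u) b then 1 else 0) +
        (if a ≤ pp ∧ q ≤ (Equiv.swap a b * u) a then 1 else 0) := by
      rw [hua, hub, hva, hvb]
      simp only [Fin.le_def]
      have hab2 : (a : ℕ) < b := hab
      split_ifs <;> omega
    omega
  · intro h
    have : u a = (Equiv.swap a b * u) a := by rw [← h]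
    rw [hua] at this
    simp [Equiv.Perm.mul_apply, hua] at this
    exact hab' this

/-- Fix `1 ≤ k < n` and let `ŵ ∈ Sₙ` be the longest element of
`S_k × S_{[k+1,n]}` (in `Fin n`: `ŵ t = k − 1 − t` for `t < k` and
`ŵ t = n + k − 1 − t` for `t ≥ k`).  Let `S'` be a set of pairwise disjoint pairs
`(iₛ, jₛ)` with `iₛ ≤ k < jₛ` (in `Fin n`: first coordinate `< k`, second `≥ k`),
and let `(i, j)` with `i ≤ k < j` be disjoint from all pairs of `S'`.  Then
`ŵ·σ_{S'}·ŵ < ŵ·σ_{S'∪{(i,j)}}·ŵ` strictly in the Bruhat order. -/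
theorem bruhat_add_arc (n k : ℕ) (hk1 : 1 ≤ k) (hkn : k < n) (m : ℕ)
    (p : Fin m → Fin n × Fin n)
    (hp : ∀ s, ((p s).1 : ℕ) < k ∧ k ≤ ((p s).2 : ℕ))
    (hdisj : ∀ s t : Fin m, s ≠ t →
      (p s).1 ≠ (p t).1 ∧ (p s).1 ≠ (p t).2 ∧ (p s).2 ≠ (p t).1 ∧ (p s).2 ≠ (p t).2)
    (i j : Fin n) (hi : (i : ℕ) < k) (hj : k ≤ (j : ℕ))
    (hnew : ∀ s : Fin m,
      i ≠ (p s).1 ∧ i ≠ (p s).2 ∧ j ≠ (p s).1 ∧ j ≠ (p s).2)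
    (w : Equiv.Perm (Fin n))
    (hw : ∀ t : Fin n,
      (w t : ℕ) = if (t : ℕ) < k then k - 1 - (t : ℕ) else n + k - 1 - (t : ℕ))
    (σ' σ : Equiv.Perm (Fin n))
    (hσ' : σ' = (List.ofFn fun s => Equiv.swap (p s).1 (p s).2).prod)
    (hσ : σ = Equiv.swap i j * σ') :
    bruhatLT (w * σ' * w) (w * σ * w) := by
  -- w is an involution
  have hw2 : w * w = 1 := by
    ext t
    have h1 := hw t
    have h2 := hw (w t)
    have ht := t.isLt
    have hwt := (w t).isLt
    simp only [Equiv.Perm.mul_apply, Equiv.Perm.one_apply]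
    by_cases h : (t : ℕ) < k
    · rw [if_pos h] at h1
      have hlt : (w t : ℕ) < k := by omega
      rw [if_pos hlt] at h2
      omega
    · rw [if_neg h] at h1
      have hlt : ¬ (w t : ℕ) < k := by omega
      rw [if_neg hlt] at h2
      omega
  have hwinv : w⁻¹ = w := by
    rw [eq_comm, eq_inv_iff_mul_eq_one, hw2]
  -- σ' fixes i and j
  have hfix : ∀ x : Fin n, (∀ s, x ≠ (p s).1 ∧ x ≠ (p s).2) → σ' x = x := by
    intro x hx
    rw [hσ']
    apply prod_fix_aux
    intro g hg
    rw [List.mem_ofFn] at hg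
    obtain ⟨s, rfl⟩ := hg
    exact Equiv.swap_apply_of_ne_of_ne (hx s).1 (hx s).2
  have hσi : σ' i = i := hfix i fun s => ⟨(hnew s).1, (hnew s).2.1⟩
  have hσj : σ' j = j := hfix j fun s => ⟨(hnew s).2.2.1, (hnew s).2.2.2⟩
  set a := w i with ha
  set b := w j with hb
  have hai : (a : ℕ) = k - 1 - (i : ℕ) := by rw [ha, hw i, if_pos hi]
  have hbj : (b : ℕ) = n + k - 1 - (j : ℕ) := by
    rw [hb, hw j, if_neg (by omega)]
  have hab : a < b := by
    have := j.isLt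
    simp only [Fin.lt_def]
    omega
  have hwa : w a = i := by
    have : (w * w) i = (1 : Equiv.Perm (Fin n)) i := by rw [hw2]
    simpa [Equiv.Perm.mul_apply] using this
  have hwb : w b = j := by
    have : (w * w) j = (1 : Equiv.Perm (Fin n)) j := by rw [hw2]
    simpa [Equiv.Perm.mul_apply] using this
  have hua : (w * σ' * w) a = a := by
    simp [Equiv.Perm.mul_apply, hwa, hσi]
    exact ha.symm
  have hub : (w * σ' * w) b = b := by
    simp [Equiv.Perm.mul_apply, hwb, hσj]
    exact hb.symm
  have hveq : w * σ * w = Equiv.swap a b * (w * σ' * w) := by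
    rw [hσ, ha, hb, Equiv.swap_apply_apply, hwinv]
    have h4 : w * Equiv.swap i j * w * w = w * Equiv.swap i j := by
      rw [mul_assoc, hw2, mul_one]
    rw [show Equiv.swap i j * σ' = Equiv.swap i j * σ' from rfl]
    calc w * (Equiv.swap i j * σ') * w = (w * Equiv.swap i j * w * w) * σ' * w := by
          rw [h4]; group
      _ = w * Equiv.swap i j * w * (w * σ' * w) := by group
  rw [hveq]
  exact key_aux _ a b hab hua hub
end

section
/- Fix 1 ≤ k < n and let ŵ ∈ S_n be defined by ŵ(t) = k+1−t for 1 ≤ t ≤ k and ŵ(t) = n+k+1−t for k+1 ≤ t ≤ n. Let T be a set of pairwise disjoint pairs (i_s,j_s) with i_s ≤ k < j_s, let i₁, i ≤ k be two distinct indices that are not endpoints of any pair of T, and let j₁ > k not be an endpoint of any pair of T. Put S = {(i₁,j₁)} ∪ T and S' = {(i,j₁)} ∪ T, and let σ_S, σ_{S'} be the products of the corresponding transpositions. Then ŵ·σ_{S'}·ŵ < ŵ·σ_S·ŵ in the Bruhat order on S_n if and only if i < i₁. -/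
private lemma list_prod_fix {n : ℕ} (l : List (Equiv.Perm (Fin n))) (x : Fin n)
    (h : ∀ f ∈ l, f x = x) : l.prod x = x := by
  induction l with
  | nil => simp
  | cons f l ih =>
    rw [List.prod_cons, Equiv.Perm.mul_apply,
      ih (fun g hg => h g (List.mem_cons_of_mem f hg)), h f List.mem_cons_self]

private lemma card_split {n : ℕ} (x : Equiv.Perm (Fin n)) (a a₁ b₁ p q : Fin n)
    (h1 : a ≠ a₁) (h2 : a ≠ b₁) (h3 : a₁ ≠ b₁) :
    (Finset.univ.filter fun t : Fin n => t ≤ p ∧ q ≤ x t).card =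
      ((Finset.univ \ {a, a₁, b₁}).filter fun t : Fin n => t ≤ p ∧ q ≤ x t).card
      + ((if a ≤ p ∧ q ≤ x a then 1 else 0) + (if a₁ ≤ p ∧ q ≤ x a₁ then 1 else 0)
         + (if b₁ ≤ p ∧ q ≤ x b₁ then 1 else 0)) := by
  classical
  have hs : (Finset.univ : Finset (Fin n)) =
      (Finset.univ \ {a, a₁, b₁}) ∪ {a, a₁, b₁} :=
    (Finset.sdiff_union_of_subset (Finset.subset_univ _)).symm
  nth_rewrite 1 [hs]
  rw [Finset.filter_union,
    Finset.card_union_of_disjoint (Finset.disjoint_filter_filter Finset.sdiff_disjoint)]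
  congr 1
  rw [Finset.card_filter]
  have hma : a ∉ ({a₁, b₁} : Finset (Fin n)) := by simp [h1, h2]
  have hma₁ : a₁ ∉ ({b₁} : Finset (Fin n)) := by simp [h3]
  rw [show ({a, a₁, b₁} : Finset (Fin n)) = insert a (insert a₁ {b₁}) from rfl,
    Finset.sum_insert hma, Finset.sum_insert hma₁, Finset.sum_singleton, add_assoc]



/-- Fix `1 ≤ k < n` and let `ŵ ∈ Sₙ` be the longest element of
`S_k × S_{[k+1,n]}`.  Let `T` be a set of pairwise disjoint pairs `(iₛ, jₛ)` with
`iₛ ≤ k < jₛ`, let `i₁, i ≤ k` be two distinct indices which are not endpoints of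
any pair of `T`, and let `j₁ > k` not be an endpoint of any pair of `T`.  Put
`S = {(i₁, j₁)} ∪ T` and `S' = {(i, j₁)} ∪ T`.  Then
`ŵ·σ_{S'}·ŵ < ŵ·σ_S·ŵ` in the Bruhat order iff `i < i₁`. -/
theorem bruhat_move_left_endpoint (n k : ℕ) (hk1 : 1 ≤ k) (hkn : k < n) (m : ℕ)
    (p : Fin m → Fin n × Fin n)
    (hp : ∀ s, ((p s).1 : ℕ) < k ∧ k ≤ ((p s).2 : ℕ))
    (hdisj : ∀ s t : Fin m, s ≠ t →
      (p s).1 ≠ (p t).1 ∧ (p s).1 ≠ (p t).2 ∧ (p s).2 ≠ (p t).1 ∧ (p s).2 ≠ (p t).2)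
    (i₁ i j₁ : Fin n) (hi₁ : (i₁ : ℕ) < k) (hi : (i : ℕ) < k) (hii₁ : i ≠ i₁)
    (hj₁ : k ≤ (j₁ : ℕ))
    (hnew : ∀ s : Fin m,
      i₁ ≠ (p s).1 ∧ i₁ ≠ (p s).2 ∧ i ≠ (p s).1 ∧ i ≠ (p s).2 ∧
        j₁ ≠ (p s).1 ∧ j₁ ≠ (p s).2)
    (w : Equiv.Perm (Fin n))
    (hw : ∀ t : Fin n,
      (w t : ℕ) = if (t : ℕ) < k then k - 1 - (t : ℕ) else n + k - 1 - (t : ℕ))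
    (σT σS σS' : Equiv.Perm (Fin n))
    (hσT : σT = (List.ofFn fun s => Equiv.swap (p s).1 (p s).2).prod)
    (hσS : σS = Equiv.swap i₁ j₁ * σT)
    (hσS' : σS' = Equiv.swap i j₁ * σT) :
    bruhatLT (w * σS' * w) (w * σS * w) ↔ i < i₁ := by
  -- numeric values
  have hj₁n : (j₁ : ℕ) < n := j₁.isLt
  have ha : (w i : ℕ) = k - 1 - (i : ℕ) := by rw [hw, if_pos hi]
  have ha₁ : (w i₁ : ℕ) = k - 1 - (i₁ : ℕ) := by rw [hw, if_pos hi₁]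
  have hb₁ : (w j₁ : ℕ) = n + k - 1 - (j₁ : ℕ) := by
    rw [hw, if_neg (by omega)]
  have haK : (w i : ℕ) < k := by omega
  have ha₁K : (w i₁ : ℕ) < k := by omega
  have hKb : k ≤ (w j₁ : ℕ) := by omega
  -- w is an involution
  have hww : ∀ t : Fin n, w (w t) = t := by
    intro t
    have h1 := hw t
    have h2 := hw (w t)
    have ht : (t : ℕ) < n := t.isLt
    apply Fin.ext
    rw [h2, h1]
    split_ifs at * <;> omega
  -- σT fixes points that are not endpoints
  have hfix : ∀ x : Fin n, (∀ s, x ≠ (p s).1 ∧ x ≠ (p s).2) → σT x = x := by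
    intro x hx
    rw [hσT]
    apply list_prod_fix
    intro f hf
    simp only [List.mem_ofFn, Set.mem_range] at hf
    obtain ⟨s, rfl⟩ := hf
    exact Equiv.swap_apply_of_ne_of_ne (hx s).1 (hx s).2
  have hfixi : σT i = i := hfix i fun s => ⟨(hnew s).2.2.1, (hnew s).2.2.2.1⟩
  have hfixi₁ : σT i₁ = i₁ := hfix i₁ fun s => ⟨(hnew s).1, (hnew s).2.1⟩
  have hfixj₁ : σT j₁ = j₁ := hfix j₁ fun s => ⟨(hnew s).2.2.2.2.1, (hnew s).2.2.2.2.2⟩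
  -- distinctness
  have hii₁' : (i : ℕ) ≠ (i₁ : ℕ) := fun h => hii₁ (Fin.ext h)
  have haa₁ : w i ≠ w i₁ := fun h => hii₁ (w.injective h)
  have hab : w i ≠ w j₁ := fun h => by
    have := congrArg (Fin.val) h; omega
  have ha₁b : w i₁ ≠ w j₁ := fun h => by
    have := congrArg (Fin.val) h; omega
  have hij₁ : i ≠ j₁ := fun h => by have := congrArg (Fin.val) h; omega
  have hi₁j₁ : i₁ ≠ j₁ := fun h => by have := congrArg (Fin.val) h; omega
  -- values of u and v at the three special points
  have huA : (w * σS' * w) (w i) = w j₁ := by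
    simp only [Equiv.Perm.mul_apply]
    rw [hww, hσS', Equiv.Perm.mul_apply, hfixi, Equiv.swap_apply_left]
  have huA₁ : (w * σS' * w) (w i₁) = w i₁ := by
    simp only [Equiv.Perm.mul_apply]
    rw [hww, hσS', Equiv.Perm.mul_apply, hfixi₁,
      Equiv.swap_apply_of_ne_of_ne (Ne.symm hii₁) hi₁j₁]
  have huB : (w * σS' * w) (w j₁) = w i := by
    simp only [Equiv.Perm.mul_apply]
    rw [hww, hσS', Equiv.Perm.mul_apply, hfixj₁, Equiv.swap_apply_right]
  have hvA : (w * σS * w) (w i) = w i := by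
    simp only [Equiv.Perm.mul_apply]
    rw [hww, hσS, Equiv.Perm.mul_apply, hfixi,
      Equiv.swap_apply_of_ne_of_ne hii₁ hij₁]
  have hvA₁ : (w * σS * w) (w i₁) = w j₁ := by
    simp only [Equiv.Perm.mul_apply]
    rw [hww, hσS, Equiv.Perm.mul_apply, hfixi₁, Equiv.swap_apply_left]
  have hvB : (w * σS * w) (w j₁) = w i₁ := by
    simp only [Equiv.Perm.mul_apply]
    rw [hww, hσS, Equiv.Perm.mul_apply, hfixj₁, Equiv.swap_apply_right]
  -- agreement off the three special points
  have hagree : ∀ t : Fin n, t ≠ w i → t ≠ w i₁ → t ≠ w j₁ →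
      (w * σS' * w) t = (w * σS * w) t := by
    intro t h1 h2 h3
    simp only [Equiv.Perm.mul_apply]
    congr 1
    have hwt1 : σT (w t) ≠ i := by
      intro h
      apply h1
      have : w t = i := by rw [← hfixi] at h; exact σT.injective h
      rw [← this, hww]
    have hwt2 : σT (w t) ≠ i₁ := by
      intro h
      apply h2
      have : w t = i₁ := by rw [← hfixi₁] at h; exact σT.injective h
      rw [← this, hww]
    have hwt3 : σT (w t) ≠ j₁ := by
      intro h
      apply h3
      have : w t = j₁ := by rw [← hfixj₁] at h; exact σT.injective h
      rw [← this, hww]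
    rw [hσS, hσS', Equiv.Perm.mul_apply, Equiv.Perm.mul_apply,
      Equiv.swap_apply_of_ne_of_ne hwt1 hwt3,
      Equiv.swap_apply_of_ne_of_ne hwt2 hwt3]
  -- complement cards agree
  have hcompl : ∀ p' q' : Fin n,
      ((Finset.univ \ {w i, w i₁, w j₁}).filter
        fun t : Fin n => t ≤ p' ∧ q' ≤ (w * σS' * w) t).card =
      ((Finset.univ \ {w i, w i₁, w j₁}).filter
        fun t : Fin n => t ≤ p' ∧ q' ≤ (w * σS * w) t).card := by
    intro p' q'
    congr 1
    apply Finset.filter_congr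
    intro t ht
    simp only [Finset.mem_sdiff, Finset.mem_univ, Finset.mem_insert,
      Finset.mem_singleton, true_and, not_or] at ht
    rw [hagree t ht.1 ht.2.1 ht.2.2]
  constructor
  · rintro ⟨hle, -⟩
    rw [Fin.lt_def]
    by_contra hni
    have hgt : (i₁ : ℕ) < (i : ℕ) := by omega
    have haa₁' : (w i : ℕ) < (w i₁ : ℕ) := by omega
    have := hle (w i) (w i₁)
    rw [card_split _ (w i) (w i₁) (w j₁) _ _ haa₁ hab ha₁b,
      card_split _ (w i) (w i₁) (w j₁) _ _ haa₁ hab ha₁b,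
      hcompl, huA, huA₁, huB, hvA, hvA₁, hvB] at this
    simp only [Fin.le_def] at this
    split_ifs at this <;> omega
  · intro hlt
    rw [Fin.lt_def] at hlt
    have ha₁a : (w i₁ : ℕ) < (w i : ℕ) := by omega
    constructor
    · intro p' q'
      rw [card_split _ (w i) (w i₁) (w j₁) _ _ haa₁ hab ha₁b,
        card_split _ (w i) (w i₁) (w j₁) _ _ haa₁ hab ha₁b,
        hcompl, huA, huA₁, huB, hvA, hvA₁, hvB]
      apply Nat.add_le_add_left
      simp only [Fin.le_def]
      split_ifs <;> omega
    · intro h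
      have hx := Equiv.ext_iff.mp h (w i)
      rw [huA, hvA] at hx
      exact hab hx.symm
end

section
/- Fix 1 ≤ k < n and let ŵ ∈ S_n be defined by ŵ(t) = k+1−t for 1 ≤ t ≤ k and ŵ(t) = n+k+1−t for k+1 ≤ t ≤ n. Let T be a set of pairwise disjoint pairs with first coordinate ≤ k and second coordinate > k, and let i₁ < i₂ ≤ k and j₁ ≠ j₂ with j₁, j₂ > k be four indices none of which is an endpoint of a pair of T. Put S = {(i₁,j₁),(i₂,j₂)} ∪ T and S' = {(i₂,j₁),(i₁,j₂)} ∪ T, and let σ_S, σ_{S'} be the products of the corresponding transpositions. Then ŵ·σ_{S'}·ŵ < ŵ·σ_S·ŵ in the Bruhat order on S_n if and only if j₂ < j₁. -/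
lemma list_prod_apply_fix {α : Type*} (l : List (Equiv.Perm α)) (x : α)
    (h : ∀ g ∈ l, g x = x) : l.prod x = x := by
  induction l with
  | nil => rfl
  | cons g l ih =>
      rw [List.prod_cons, Equiv.Perm.mul_apply,
        ih (fun g hg => h g (List.mem_cons_of_mem _ hg)), h g List.mem_cons_self]

set_option maxHeartbeats 1600000 in
lemma bruhat_key {n : ℕ} (u v : Equiv.Perm (Fin n)) (a b c d : Fin n)
    (hba : b < a) (hac : a < c) (had : a < d) (hcd : c ≠ d)
    (hua : u a = d) (hub : u b = c) (huc : u c = b) (hud : u d = a)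
    (hva : v a = c) (hvb : v b = d) (hvc : v c = a) (hvd : v d = b)
    (hrest : ∀ x, x ≠ a → x ≠ b → x ≠ c → x ≠ d → u x = v x) :
    bruhatLT u v ↔ c < d := by
  have hba' : (b : ℕ) < a := hba
  have hac' : (a : ℕ) < c := hac
  have had' : (a : ℕ) < d := had
  have hcd' : (c : ℕ) ≠ d := fun h => hcd (Fin.ext h)
  have hab : a ≠ b := (ne_of_lt hba).symm
  have hac2 : a ≠ c := ne_of_lt hac
  have had2 : a ≠ d := ne_of_lt had
  have hbc : b ≠ c := ne_of_lt (lt_trans hba hac)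
  have hbd : b ≠ d := ne_of_lt (lt_trans hba had)
  have hsum4 : ∀ f : Fin n → ℕ,
      ∑ x ∈ ({a, b, c, d} : Finset (Fin n)), f x = f a + f b + f c + f d := by
    intro f
    rw [show ({a, b, c, d} : Finset (Fin n)) = insert a (insert b (insert c {d})) from rfl,
      Finset.sum_insert (by simp [hab, hac2, had2]),
      Finset.sum_insert (by simp [hbc, hbd]),
      Finset.sum_insert (by simp [hcd]), Finset.sum_singleton]
    ring
  have hsplit : ∀ (e : Equiv.Perm (Fin n)) (P Q : Fin n),
      (Finset.univ.filter fun x : Fin n => x ≤ P ∧ Q ≤ e x).card =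
        (∑ x ∈ Finset.univ \ ({a, b, c, d} : Finset (Fin n)),
            (if x ≤ P ∧ Q ≤ e x then 1 else 0)) +
          ((if a ≤ P ∧ Q ≤ e a then 1 else 0) + (if b ≤ P ∧ Q ≤ e b then 1 else 0)
            + (if c ≤ P ∧ Q ≤ e c then 1 else 0) + (if d ≤ P ∧ Q ≤ e d then 1 else 0)) := by
    intro e P Q
    rw [Finset.card_filter,
      ← Finset.sum_sdiff (Finset.subset_univ ({a, b, c, d} : Finset (Fin n))), hsum4]
  have hrestsum : ∀ (P Q : Fin n),
      (∑ x ∈ Finset.univ \ ({a, b, c, d} : Finset (Fin n)),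
          (if x ≤ P ∧ Q ≤ u x then 1 else 0)) =
        ∑ x ∈ Finset.univ \ ({a, b, c, d} : Finset (Fin n)),
          (if x ≤ P ∧ Q ≤ v x then 1 else 0) := by
    intro P Q
    refine Finset.sum_congr rfl ?_
    intro x hx
    simp only [Finset.mem_sdiff, Finset.mem_insert, Finset.mem_singleton, not_or] at hx
    rw [hrest x hx.2.1 hx.2.2.1 hx.2.2.2.1 hx.2.2.2.2]
  constructor
  · rintro ⟨hle, -⟩
    by_contra hdc
    have hdc' : (d : ℕ) < c := by
      rcases lt_or_ge (c : ℕ) d with h | h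
      · exact absurd (Fin.lt_def.mpr h) hdc
      · omega
    have H := hle b c
    rw [hsplit u b c, hsplit v b c, hrestsum b c, hua, hub, huc, hud, hva, hvb, hvc, hvd] at H
    simp only [Fin.le_def] at H
    split_ifs at H <;> omega
  · intro hcdlt
    have hcd'' : (c : ℕ) < d := hcdlt
    refine ⟨?_, ?_⟩
    · intro P Q
      rw [hsplit u P Q, hsplit v P Q, hrestsum P Q, hua, hub, huc, hud, hva, hvb, hvc, hvd]
      apply Nat.add_le_add_left
      simp only [Fin.le_def]
      split_ifs <;> omega
    · intro h
      have h2 : u a = v a := by rw [h]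
      rw [hua, hva] at h2
      exact hcd h2.symm

/-- Fix `1 ≤ k < n` and let `ŵ ∈ Sₙ` be the longest element of
`S_k × S_{[k+1,n]}`.  Let `T` be a set of pairwise disjoint pairs with first
coordinate `≤ k` and second `> k`, and let `i₁ < i₂ ≤ k` and `j₁ ≠ j₂` with
`j₁, j₂ > k` be four indices none of which is an endpoint of a pair of `T`.  Put
`S = {(i₁, j₁), (i₂, j₂)} ∪ T` and `S' = {(i₂, j₁), (i₁, j₂)} ∪ T`.  Then
`ŵ·σ_{S'}·ŵ < ŵ·σ_S·ŵ` in the Bruhat order iff `j₂ < j₁`. -/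
theorem bruhat_swap_two_arcs (n k : ℕ) (hk1 : 1 ≤ k) (hkn : k < n) (m : ℕ)
    (p : Fin m → Fin n × Fin n)
    (hp : ∀ s, ((p s).1 : ℕ) < k ∧ k ≤ ((p s).2 : ℕ))
    (hdisj : ∀ s t : Fin m, s ≠ t →
      (p s).1 ≠ (p t).1 ∧ (p s).1 ≠ (p t).2 ∧ (p s).2 ≠ (p t).1 ∧ (p s).2 ≠ (p t).2)
    (i₁ i₂ j₁ j₂ : Fin n) (hi₁₂ : i₁ < i₂) (hi₂ : (i₂ : ℕ) < k)
    (hj₁ : k ≤ (j₁ : ℕ)) (hj₂ : k ≤ (j₂ : ℕ)) (hjj : j₁ ≠ j₂)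
    (hnew : ∀ s : Fin m,
      i₁ ≠ (p s).1 ∧ i₁ ≠ (p s).2 ∧ i₂ ≠ (p s).1 ∧ i₂ ≠ (p s).2 ∧
        j₁ ≠ (p s).1 ∧ j₁ ≠ (p s).2 ∧ j₂ ≠ (p s).1 ∧ j₂ ≠ (p s).2)
    (w : Equiv.Perm (Fin n))
    (hw : ∀ t : Fin n,
      (w t : ℕ) = if (t : ℕ) < k then k - 1 - (t : ℕ) else n + k - 1 - (t : ℕ))
    (σT σS σS' : Equiv.Perm (Fin n))
    (hσT : σT = (List.ofFn fun s => Equiv.swap (p s).1 (p s).2).prod)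
    (hσS : σS = Equiv.swap i₁ j₁ * Equiv.swap i₂ j₂ * σT)
    (hσS' : σS' = Equiv.swap i₂ j₁ * Equiv.swap i₁ j₂ * σT) :
    bruhatLT (w * σS' * w) (w * σS * w) ↔ j₂ < j₁ := by
  -- basic numeric facts
  have hi₁₂' : (i₁ : ℕ) < i₂ := hi₁₂
  have hj₁n : (j₁ : ℕ) < n := j₁.isLt
  have hj₂n : (j₂ : ℕ) < n := j₂.isLt
  have hjj' : (j₁ : ℕ) ≠ j₂ := fun h => hjj (Fin.ext h)
  -- distinctness of the four indices
  have h12 : i₁ ≠ i₂ := ne_of_lt hi₁₂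
  have h1j1 : i₁ ≠ j₁ := by intro h; have := congrArg Fin.val h; omega
  have h1j2 : i₁ ≠ j₂ := by intro h; have := congrArg Fin.val h; omega
  have h2j1 : i₂ ≠ j₁ := by intro h; have := congrArg Fin.val h; omega
  have h2j2 : i₂ ≠ j₂ := by intro h; have := congrArg Fin.val h; omega
  -- w is an involution
  have hinv : ∀ x : Fin n, w (w x) = x := by
    intro x
    have h1 := hw x
    have h2 := hw (w x)
    have hx := x.isLt
    have hwx := (w x).isLt
    apply Fin.ext
    rw [h2, h1]
    split_ifs <;> omega
  -- σT fixes the four indices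
  have hfix : ∀ x : Fin n, (∀ s, x ≠ (p s).1 ∧ x ≠ (p s).2) → σT x = x := by
    intro x hx
    rw [hσT]
    apply list_prod_apply_fix
    intro g hg
    rw [List.mem_ofFn] at hg
    obtain ⟨s, rfl⟩ := hg
    exact Equiv.swap_apply_of_ne_of_ne (hx s).1 (hx s).2
  have hTi₁ : σT i₁ = i₁ := hfix i₁ fun s => ⟨(hnew s).1, (hnew s).2.1⟩
  have hTi₂ : σT i₂ = i₂ := hfix i₂ fun s => ⟨(hnew s).2.2.1, (hnew s).2.2.2.1⟩
  have hTj₁ : σT j₁ = j₁ := hfix j₁ fun s => ⟨(hnew s).2.2.2.2.1, (hnew s).2.2.2.2.2.1⟩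
  have hTj₂ : σT j₂ = j₂ := hfix j₂ fun s => ⟨(hnew s).2.2.2.2.2.2.1, (hnew s).2.2.2.2.2.2.2⟩
  -- values of σS and σS' on the four indices
  have hSi₁ : σS i₁ = j₁ := by
    rw [hσS, Equiv.Perm.mul_apply, Equiv.Perm.mul_apply, hTi₁,
      Equiv.swap_apply_of_ne_of_ne h12 h1j2, Equiv.swap_apply_left]
  have hSi₂ : σS i₂ = j₂ := by
    rw [hσS, Equiv.Perm.mul_apply, Equiv.Perm.mul_apply, hTi₂, Equiv.swap_apply_left,
      Equiv.swap_apply_of_ne_of_ne (Ne.symm h1j2) (Ne.symm hjj)]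
  have hSj₁ : σS j₁ = i₁ := by
    rw [hσS, Equiv.Perm.mul_apply, Equiv.Perm.mul_apply, hTj₁,
      Equiv.swap_apply_of_ne_of_ne (Ne.symm h2j1) hjj, Equiv.swap_apply_right]
  have hSj₂ : σS j₂ = i₂ := by
    rw [hσS, Equiv.Perm.mul_apply, Equiv.Perm.mul_apply, hTj₂, Equiv.swap_apply_right,
      Equiv.swap_apply_of_ne_of_ne (Ne.symm h12) h2j1]
  have hS'i₁ : σS' i₁ = j₂ := by
    rw [hσS', Equiv.Perm.mul_apply, Equiv.Perm.mul_apply, hTi₁, Equiv.swap_apply_left,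
      Equiv.swap_apply_of_ne_of_ne (Ne.symm h2j2) (Ne.symm hjj)]
  have hS'i₂ : σS' i₂ = j₁ := by
    rw [hσS', Equiv.Perm.mul_apply, Equiv.Perm.mul_apply, hTi₂,
      Equiv.swap_apply_of_ne_of_ne (Ne.symm h12) h2j2, Equiv.swap_apply_left]
  have hS'j₁ : σS' j₁ = i₂ := by
    rw [hσS', Equiv.Perm.mul_apply, Equiv.Perm.mul_apply, hTj₁,
      Equiv.swap_apply_of_ne_of_ne (Ne.symm h1j1) hjj, Equiv.swap_apply_right]
  have hS'j₂ : σS' j₂ = i₁ := by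
    rw [hσS', Equiv.Perm.mul_apply, Equiv.Perm.mul_apply, hTj₂, Equiv.swap_apply_right,
      Equiv.swap_apply_of_ne_of_ne h12 h1j1]
  -- the four conjugated points
  have hwa : (w i₁ : ℕ) = k - 1 - (i₁ : ℕ) := by rw [hw]; exact if_pos (by omega)
  have hwb : (w i₂ : ℕ) = k - 1 - (i₂ : ℕ) := by rw [hw]; exact if_pos hi₂
  have hwc : (w j₁ : ℕ) = n + k - 1 - (j₁ : ℕ) := by rw [hw]; exact if_neg (by omega)
  have hwd : (w j₂ : ℕ) = n + k - 1 - (j₂ : ℕ) := by rw [hw]; exact if_neg (by omega)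
  have hba : w i₂ < w i₁ := by rw [Fin.lt_def, hwa, hwb]; omega
  have hac : w i₁ < w j₁ := by rw [Fin.lt_def, hwa, hwc]; omega
  have had : w i₁ < w j₂ := by rw [Fin.lt_def, hwa, hwd]; omega
  have hcd : w j₁ ≠ w j₂ := fun h => hjj (w.injective h)
  -- apply key lemma
  rw [bruhat_key (w * σS' * w) (w * σS * w) (w i₁) (w i₂) (w j₁) (w j₂) hba hac had hcd
    (by simp only [Equiv.Perm.mul_apply, hinv, hS'i₁])
    (by simp only [Equiv.Perm.mul_apply, hinv, hS'i₂])
    (by simp only [Equiv.Perm.mul_apply, hinv, hS'j₁])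
    (by simp only [Equiv.Perm.mul_apply, hinv, hS'j₂])
    (by simp only [Equiv.Perm.mul_apply, hinv, hSi₁])
    (by simp only [Equiv.Perm.mul_apply, hinv, hSi₂])
    (by simp only [Equiv.Perm.mul_apply, hinv, hSj₁])
    (by simp only [Equiv.Perm.mul_apply, hinv, hSj₂])
    ?_]
  · rw [Fin.lt_def, Fin.lt_def, hwc, hwd]; omega
  · intro x hxa hxb hxc hxd
    have hy1 : w x ≠ i₁ := by intro h; exact hxa (by rw [← hinv x, h])
    have hy2 : w x ≠ i₂ := by intro h; exact hxb (by rw [← hinv x, h])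
    have hy3 : w x ≠ j₁ := by intro h; exact hxc (by rw [← hinv x, h])
    have hy4 : w x ≠ j₂ := by intro h; exact hxd (by rw [← hinv x, h])
    have hz1 : σT (w x) ≠ i₁ := fun h => hy1 (σT.injective (h.trans hTi₁.symm))
    have hz2 : σT (w x) ≠ i₂ := fun h => hy2 (σT.injective (h.trans hTi₂.symm))
    have hz3 : σT (w x) ≠ j₁ := fun h => hy3 (σT.injective (h.trans hTj₁.symm))
    have hz4 : σT (w x) ≠ j₂ := fun h => hy4 (σT.injective (h.trans hTj₂.symm))
    simp only [Equiv.Perm.mul_apply]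
    congr 1
    rw [hσS, hσS']
    simp only [Equiv.Perm.mul_apply]
    rw [Equiv.swap_apply_of_ne_of_ne hz1 hz4, Equiv.swap_apply_of_ne_of_ne hz2 hz3,
      Equiv.swap_apply_of_ne_of_ne hz2 hz4, Equiv.swap_apply_of_ne_of_ne hz1 hz3]
end
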